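/- arXiv:1509.03792 — 3 statements merged into one kernel-verified Lean document; each statement's English description precedes it below -/
import Mathlib

section
/- Let r ≥ 1 be an integer and let h : [0,∞) → ℝ be such that h, h', …, h^{(r−1)} are absolutely continuous and the right derivative h^{(r)}_+ of order r exists everywhere. Then for every integer L ≥ 1 and every integer k ≥ 0, (Δ^r g)(k) = (−1)^r L^{−r} ∫_{[0,1]^r} h^{(r)}_+((k + u_1 + ⋯ + u_r)/L) du_1 ⋯ du_r, where g(x) = h(x/L). -/
open MeasureTheory Metric Set
open scoped ENNReal NNReal

noncomputable section

attribute [local instance] Classical.propDecidable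

/-- Euclidean space `ℝ^{d+1}`. -/
abbrev ESp (d : ℕ) : Type := EuclideanSpace ℝ (Fin (d + 1))

/-- The unit sphere `S^d ⊆ ℝ^{d+1}`. -/
abbrev Sph (d : ℕ) : Type := ↥(Metric.sphere (0 : ESp d) 1)

/-- The rotation-invariant probability measure `σ` on the sphere `S^d`
(obtained by normalizing the surface measure induced by Lebesgue measure). -/
def sphMeasure (d : ℕ) : Measure (Sph d) :=
  (((volume : Measure (ESp d)).toSphere) Set.univ)⁻¹ • (volume : Measure (ESp d)).toSphere

/-- `Π_L^d` : restrictions to the sphere of real polynomials on `ℝ^{d+1}` of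
total degree at most `L`. -/
def PiPoly (d L : ℕ) : Set (Sph d → ℝ) :=
  {f | ∃ P : MvPolynomial (Fin (d + 1)) ℝ, P.totalDegree ≤ L ∧
    ∀ x : Sph d, f x = MvPolynomial.eval (fun i => (x : ESp d) i) P}

/-- `H_ℓ^d` : spherical harmonics of degree `ℓ`, i.e. the orthogonal complement of
`Π_{ℓ-1}^d` in `Π_ℓ^d` with respect to the `L_2(σ)` inner product
(`H_0^d` being the constants). -/
def Harm (d ℓ : ℕ) : Set (Sph d → ℝ) :=
  if ℓ = 0 then PiPoly d 0
  else {f | f ∈ PiPoly d ℓ ∧ ∀ Q ∈ PiPoly d (ℓ - 1), ∫ x, f x * Q x ∂(sphMeasure d) = 0}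

/-- `g` is the orthogonal projection `H_ℓ(f)` of `f` onto `H_ℓ^d` :
`g ∈ H_ℓ^d` and `⟨f, Y⟩ = ⟨g, Y⟩` for all `Y ∈ H_ℓ^d`. -/
def IsFourierProj (d : ℕ) (f : Sph d → ℝ) (ℓ : ℕ) (g : Sph d → ℝ) : Prop :=
  g ∈ Harm d ℓ ∧ ∀ Y ∈ Harm d ℓ,
    ∫ x, f x * Y x ∂(sphMeasure d) = ∫ x, g x * Y x ∂(sphMeasure d)

/-- The projection `H_ℓ(f)` (chosen canonically; it is unique when it exists). -/
def fourierProj (d : ℕ) (f : Sph d → ℝ) (ℓ : ℕ) : Sph d → ℝ :=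
  if h : ∃ g, IsFourierProj d f ℓ g then h.choose else 0

/-- A filter: a continuous function on `[0,∞)` with `h ≡ 1` on `[0,1]` and `h ≡ 0` on `[2,∞)`. -/
def IsFilter (h : ℝ → ℝ) : Prop :=
  ContinuousOn h (Set.Ici 0) ∧ (∀ t ∈ Set.Icc (0:ℝ) 1, h t = 1) ∧ ∀ t : ℝ, 2 ≤ t → h t = 0

/-- The filtered approximation operator `V_L^h(f) = Σ_{ℓ≥0} h(ℓ/L) H_ℓ(f)`;
the sum is finite since `h(ℓ/L) = 0` for `ℓ ≥ 2L`. -/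
def VL (d : ℕ) (h : ℝ → ℝ) (L : ℕ) (f : Sph d → ℝ) : Sph d → ℝ :=
  fun x => ∑ ℓ ∈ Finset.range (2 * L), h ((ℓ : ℝ) / (L : ℝ)) * fourierProj d f ℓ x

/-- Absolute continuity of `f` on a set `s ⊆ ℝ` (ε-δ definition with finitely many
non-overlapping intervals with endpoints in `s`). -/
def AbsContOn (f : ℝ → ℝ) (s : Set ℝ) : Prop :=
  ∀ ε > (0:ℝ), ∃ δ > (0:ℝ), ∀ n : ℕ, ∀ u v : Fin n → ℝ,
    (∀ i, u i ∈ s ∧ v i ∈ s ∧ u i ≤ v i) →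
    (∀ i j, i ≠ j → Disjoint (Set.Ioo (u i) (v i)) (Set.Ioo (u j) (v j))) →
    (∑ i, (v i - u i)) < δ → (∑ i, |f (v i) - f (u i)|) < ε

/-- `h ∈ W^rBV` on the set `s` : for `r = 0` this means `h` is of bounded variation on `s`;
for `r ≥ 1` it means `h, h', …, h^{(r-1)}` exist and are absolutely continuous on `s`, and the
one-sided derivatives `h^{(r)}_+`, `h^{(r)}_-` of order `r` exist everywhere on `s` and are of
bounded variation on `s`. -/
def MemWrBVOn (r : ℕ) (h : ℝ → ℝ) (s : Set ℝ) : Prop :=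
  if r = 0 then BoundedVariationOn h s
  else
    ∃ (D : ℕ → ℝ → ℝ) (Dp Dm : ℝ → ℝ),
      D 0 = h ∧
      (∀ k, k + 1 < r → ∀ t ∈ s, HasDerivWithinAt (D k) (D (k + 1) t) s t) ∧
      (∀ k, k < r → AbsContOn (D k) s) ∧
      (∀ t ∈ s, HasDerivWithinAt (D (r - 1)) (Dp t) (s ∩ Set.Ici t) t) ∧
      (∀ t ∈ s, HasDerivWithinAt (D (r - 1)) (Dm t) (s ∩ Set.Iic t) t) ∧
      BoundedVariationOn Dp s ∧ BoundedVariationOn Dm s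

/-- `h ∈ W^rBV` on `[0,∞)`. -/
def MemWrBV (r : ℕ) (h : ℝ → ℝ) : Prop := MemWrBVOn r h (Set.Ici 0)

/-- `g = f^{(s)}` is the `s`-th order (Laplace–Beltrami) derivative of `f`:
`H_0(g) = 0` and `H_ℓ(g) = (ℓ(ℓ+d-1))^{s/2} H_ℓ(f)` for `ℓ ≥ 1`. -/
def IsSobolevDeriv (d : ℕ) (s : ℝ) (f g : Sph d → ℝ) : Prop :=
  IsFourierProj d g 0 (fun _ => 0) ∧
  ∀ ℓ : ℕ, 1 ≤ ℓ → ∀ u : Sph d → ℝ, IsFourierProj d f ℓ u →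
    IsFourierProj d g ℓ (fun x => ((ℓ : ℝ) * ((ℓ : ℝ) + (d : ℝ) - 1)) ^ (s / 2) * u x)

/-- `K` is the reproducing kernel `K_ℓ` of `H_ℓ^d` in `L_2(σ)`. -/
def IsReproKernel (d ℓ : ℕ) (K : Sph d → Sph d → ℝ) : Prop :=
  (∀ y, (fun x => K x y) ∈ Harm d ℓ) ∧
  (∀ f ∈ Harm d ℓ, ∀ x, ∫ y, f y * K x y ∂(sphMeasure d) = f x)

/-- The reproducing kernel `K_ℓ(x,y) = Σ_k Y_{ℓ,k}(x) Y_{ℓ,k}(y)` of `H_ℓ^d`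
(chosen canonically; it is unique). -/
def reproKernel (d ℓ : ℕ) : Sph d → Sph d → ℝ :=
  if h : ∃ K, IsReproKernel d ℓ K then h.choose else fun _ _ => 0

/-- The filtered kernel `Φ_L^h(x,y) = Σ_{ℓ≥0} h(ℓ/L) K_ℓ(x,y)` (a finite sum). -/
def PhiL (d : ℕ) (h : ℝ → ℝ) (L : ℕ) (x y : Sph d) : ℝ :=
  ∑ ℓ ∈ Finset.range (2 * L), h ((ℓ : ℝ) / (L : ℝ)) * reproKernel d ℓ x y

/-- A positive cubature rule with nodes `y`, weights `W`, exact on `Π_M^d`. -/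
def IsPosCubature (d M N : ℕ) (y : Fin N → Sph d) (W : Fin N → ℝ) : Prop :=
  (∀ i, 0 < W i) ∧
  ∀ P ∈ PiPoly d M, ∑ i, W i * P (y i) = ∫ x, P x ∂(sphMeasure d)

/-- The filtered hyperinterpolation operator
`V_{L,N}(f)(x) = Σ_i W_i f(y_i) Φ_L^h(y_i, x)`. -/
def VLN (d : ℕ) (h : ℝ → ℝ) (L N : ℕ) (y : Fin N → Sph d) (W : Fin N → ℝ)
    (f : Sph d → ℝ) : Sph d → ℝ :=
  fun x => ∑ i, W i * f (y i) * PhiL d h L (y i) x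

/-- Forward difference operator `Δg(x) = g(x) - g(x+1)` on functions on `ℝ`. -/
def fdiff (g : ℝ → ℝ) : ℝ → ℝ := fun x => g x - g (x + 1)

/-- Forward difference operator `Δg(k) = g(k) - g(k+1)` on sequences. -/
def fdiffSeq (g : ℕ → ℝ) : ℕ → ℝ := fun k => g k - g (k + 1)


open scoped Topology
open Filter

theorem AbsContOn.continuousOn {f : ℝ → ℝ} (hf : AbsContOn f (Ici 0)) :
    ContinuousOn f (Ici 0) := by
  intro t ht
  rw [Metric.continuousWithinAt_iff]
  intro ε hε
  obtain ⟨δ, hδ, H⟩ := hf ε hε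
  refine ⟨δ, hδ, fun y hy hyd => ?_⟩
  have := H 1 (fun _ => min y t) (fun _ => max y t)
    (fun _ => ⟨Set.mem_Ici.2 (le_min hy ht), Set.mem_Ici.2 (le_max_of_le_left hy), min_le_max⟩)
    (fun i j hij => absurd (Subsingleton.elim i j) hij) ?_
  · have h1 : |f (max y t) - f (min y t)| < ε := by simpa using this
    rcases le_total y t with hyt | hyt
    · rw [max_eq_right hyt, min_eq_left hyt] at h1
      rw [Real.dist_eq, abs_sub_comm]; exact h1
    · rw [max_eq_left hyt, min_eq_right hyt] at h1
      rw [Real.dist_eq]; exact h1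
  · rw [dist_comm] at hyd
    simpa [max_sub_min_eq_abs, ← Real.dist_eq] using hyd

theorem AbsContOn.small_evar {f : ℝ → ℝ} (hf : AbsContOn f (Ici 0)) :
    ∃ δ > (0:ℝ), ∀ a b : ℝ, 0 ≤ a → b - a < δ → eVariationOn f (Icc a b) ≤ 1 := by
  obtain ⟨δ, hδ, H⟩ := hf 1 one_pos
  refine ⟨δ, hδ, fun a b ha hba => ?_⟩
  apply iSup_le
  rintro ⟨n, ⟨u, hu, hus⟩⟩
  have key : ∑ i ∈ Finset.range n, |f (u (i + 1)) - f (u i)| < 1 := by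
    have := H n (fun i : Fin n => u i) (fun i : Fin n => u (i + 1))
      (fun i => ⟨ha.trans (hus i).1, ha.trans (hus (i+1)).1, hu (Nat.le_succ _)⟩)
      (fun i j hij => ?_) ?_
    · rw [← Fin.sum_univ_eq_sum_range]
      exact this
    · rcases hij.lt_or_gt with hlt | hlt
      · refine Set.disjoint_left.2 fun x hx hx' => absurd (hx.2.trans_le ((hu (Nat.succ_le_of_lt hlt)).trans hx'.1.le)) (lt_irrefl x)
      · refine Set.disjoint_left.2 fun x hx hx' => absurd (hx'.2.trans_le ((hu (Nat.succ_le_of_lt hlt)).trans hx.1.le)) (lt_irrefl x)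
    · have : ∑ i : Fin n, (u (↑i + 1) - u ↑i) = u n - u 0 := by
        rw [Fin.sum_univ_eq_sum_range (fun i => u (i+1) - u i), Finset.sum_range_sub]
      rw [this]
      calc u n - u 0 ≤ b - a := sub_le_sub (hus n).2 (hus 0).1
      _ < δ := hba
  calc ∑ i ∈ Finset.range n, edist (f (u (i + 1))) (f (u i))
      = ENNReal.ofReal (∑ i ∈ Finset.range n, |f (u (i + 1)) - f (u i)|) := by
        rw [ENNReal.ofReal_sum_of_nonneg (fun i _ => abs_nonneg _)]
        exact Finset.sum_congr rfl fun i _ => by rw [edist_dist, Real.dist_eq]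
    _ ≤ 1 := by
        rw [← ENNReal.ofReal_one]
        exact ENNReal.ofReal_le_ofReal key.le

theorem AbsContOn.evar_lt_top {f : ℝ → ℝ} (hf : AbsContOn f (Ici 0)) (a b : ℝ) (ha : 0 ≤ a) :
    eVariationOn f (Icc a b) < ⊤ := by
  obtain ⟨δ, hδ, H⟩ := hf.small_evar
  have key : ∀ n : ℕ, ∀ a b : ℝ, 0 ≤ a → b ≤ a + n * (δ / 2) →
      eVariationOn f (Icc a b) ≤ n := by
    intro n
    induction n with
    | zero =>
      intro a b ha hb
      rcases le_or_gt b a with hba | hab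
      · rcases lt_or_eq_of_le hba with hba | hba
        · simp [Set.Icc_eq_empty_of_lt hba]
        · subst hba
          simp [Set.Icc_self, eVariationOn.subsingleton f (Set.subsingleton_singleton)]
      · exact absurd hb (by push_cast; nlinarith)
    | succ n ih =>
      intro a b ha hb
      rcases le_or_gt b a with hba | hab
      · rcases lt_or_eq_of_le hba with hba | hba
        · simp [Set.Icc_eq_empty_of_lt hba]
        · subst hba
          simp [Set.Icc_self, eVariationOn.subsingleton f (Set.subsingleton_singleton)]
      · set p := min (a + δ / 2) b with hp
        have hap : a ≤ p := le_min (by linarith) hab.le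
        have hpb : p ≤ b := min_le_right _ _
        have hsplit := eVariationOn.Icc_add_Icc f (s := Icc a b) hap hpb ⟨hap, hpb⟩
        have h1 : Icc a b ∩ Icc a p = Icc a p := by
          rw [Set.inter_eq_right.2]; exact Set.Icc_subset_Icc le_rfl hpb
        have h2 : Icc a b ∩ Icc p b = Icc p b := by
          rw [Set.inter_eq_right.2]; exact Set.Icc_subset_Icc hap le_rfl
        have h3 : Icc a b ∩ Icc a b = Icc a b := Set.inter_self _
        rw [h1, h2, h3] at hsplit
        have e1 : eVariationOn f (Icc a p) ≤ 1 := by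
          apply H a p ha; simp only [hp]; have : min (a + δ/2) b ≤ a + δ/2 := min_le_left _ _; linarith
        have e2 : eVariationOn f (Icc p b) ≤ n := by
          apply ih p b (ha.trans hap)
          rcases le_or_gt (a + δ / 2) b with hc | hc
          · have : p = a + δ / 2 := min_eq_left hc
            rw [this]; push_cast at hb ⊢; linarith
          · have : p = b := min_eq_right hc.le
            rw [this]
            have : (0:ℝ) ≤ (n:ℝ) * (δ/2) := by positivity
            linarith
        calc eVariationOn f (Icc a b) = eVariationOn f (Icc a p) + eVariationOn f (Icc p b) :=
              hsplit.symm
          _ ≤ 1 + n := add_le_add e1 e2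
          _ = ((n + 1 : ℕ) : ℝ≥0∞) := by push_cast; ring
  obtain ⟨n, hn⟩ := exists_nat_ge ((b - a) / (δ / 2))
  have : b ≤ a + n * (δ / 2) := by
    rw [div_le_iff₀ (by positivity)] at hn; linarith
  exact (key n a b ha this).trans_lt (ENNReal.natCast_lt_top n)

/-- Extension of `f` from `[0,∞)` to `ℝ` by `f (max t 0)`. -/
def ext0 (f : ℝ → ℝ) : ℝ → ℝ := fun t => f (max t 0)

theorem continuous_ext0 {f : ℝ → ℝ} (hcont : ContinuousOn f (Ici 0)) :
    Continuous (ext0 f) :=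
  hcont.comp_continuous (continuous_id.max continuous_const) (fun x => Set.mem_Ici.2 (le_max_right _ _))

theorem ext0_eq {f : ℝ → ℝ} {t : ℝ} (ht : 0 ≤ t) : ext0 f t = f t := by
  simp [ext0, max_eq_left ht]

theorem tendsto_slopes {f Dp : ℝ → ℝ}
    (hDp : ∀ t ∈ Ici (0:ℝ), HasDerivWithinAt f (Dp t) (Ici t) t) (t : ℝ) (ht : 0 ≤ t) :
    Filter.Tendsto (fun n : ℕ => ((n:ℝ)+1) * (ext0 f (t + 1/((n:ℝ)+1)) - ext0 f t))
      Filter.atTop (𝓝 (Dp t)) := by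
  have hd := hDp t ht
  rw [hasDerivWithinAt_iff_tendsto_slope] at hd
  have hpos : ∀ n : ℕ, (0:ℝ) < 1/((n:ℝ)+1) := fun n => by positivity
  have hx : Filter.Tendsto (fun n : ℕ => t + 1/((n:ℝ)+1)) Filter.atTop (𝓝[Ici t \ {t}] t) := by
    apply tendsto_nhdsWithin_of_tendsto_nhds_of_eventually_within
    · simpa using tendsto_const_nhds.add (tendsto_one_div_add_atTop_nhds_zero_nat (𝕜 := ℝ))
    · filter_upwards with n
      exact ⟨by have := hpos n; simp; linarith, by have := hpos n; simp; linarith⟩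
  have := hd.comp hx
  apply this.congr
  intro n
  have h1 : 0 ≤ t + 1/((n:ℝ)+1) := by have := hpos n; linarith
  simp only [Function.comp_apply, slope_def_field, ext0_eq ht, ext0_eq h1]
  field_simp
  ring

theorem measurable_extDp {f Dp : ℝ → ℝ} (hcont : ContinuousOn f (Ici 0))
    (hDp : ∀ t ∈ Ici (0:ℝ), HasDerivWithinAt f (Dp t) (Ici t) t) :
    Measurable (fun t => Dp (max t 0)) := by
  have hfc := continuous_ext0 hcont
  apply measurable_of_tendsto_metrizable
    (f := fun n : ℕ => fun t : ℝ =>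
      ((n:ℝ)+1) * (ext0 f (max t 0 + 1/((n:ℝ)+1)) - ext0 f (max t 0)))
  · intro n
    exact (continuous_const.mul ((hfc.comp ((continuous_id.max continuous_const).add
      continuous_const)).sub (hfc.comp (continuous_id.max continuous_const)))).measurable
  · rw [tendsto_pi_nhds]
    intro t
    exact tendsto_slopes hDp (max t 0) (le_max_right _ _)

theorem lint_translate (F : ℝ → ℝ≥0∞) (hF : Measurable F) (a : ℝ) (s : Set ℝ)
    (hs : MeasurableSet s) :
    ∫⁻ t in (fun t => a + t) ⁻¹' s, F (a + t) = ∫⁻ t in s, F t := by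
  exact (measurePreserving_add_left volume a).setLIntegral_comp_preimage_emb
    (Homeomorph.addLeft a).measurableEmbedding F s

theorem lint_scale (F : ℝ → ℝ≥0∞) (hF : Measurable F) {c : ℝ} (hc : 0 < c) (u v : ℝ) :
    ∫⁻ t in Icc u v, F (t / c) = ENNReal.ofReal c * ∫⁻ s in Icc (u/c) (v/c), F s := by
  have hmap : Measure.map (fun x : ℝ => c⁻¹ * x) volume = ENNReal.ofReal |c| • volume := by
    rw [Real.map_volume_mul_left (by positivity : c⁻¹ ≠ 0)]
    congr 1
    rw [inv_inv]
  have hxx : ∀ x : ℝ, c⁻¹ * x * c = x := fun x => by field_simp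
  have hpre : (fun x : ℝ => c⁻¹ * x) ⁻¹' Icc (u/c) (v/c) = Icc u v := by
    ext x
    simp only [Set.mem_preimage, Set.mem_Icc]
    rw [div_le_iff₀ hc, le_div_iff₀ hc, hxx]
  calc ∫⁻ t in Icc u v, F (t / c)
      = ∫⁻ t in (fun x : ℝ => c⁻¹ * x) ⁻¹' Icc (u/c) (v/c), F (c⁻¹ * t) := by
        rw [hpre]
        apply lintegral_congr
        intro x
        rw [div_eq_inv_mul]
    _ = ∫⁻ s in Icc (u/c) (v/c), F s
          ∂(Measure.map (fun x : ℝ => c⁻¹ * x) volume) :=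
        (setLIntegral_map measurableSet_Icc hF (measurable_const_mul c⁻¹)).symm
    _ = ENNReal.ofReal c * ∫⁻ s in Icc (u/c) (v/c), F s := by
        rw [hmap, abs_of_pos hc, Measure.restrict_smul, lintegral_smul_measure, smul_eq_mul]

theorem lint_Dp_lt_top {f Dp : ℝ → ℝ} (hf : AbsContOn f (Ici 0))
    (hDp : ∀ t ∈ Ici (0:ℝ), HasDerivWithinAt f (Dp t) (Ici t) t)
    (a b : ℝ) (ha : 0 ≤ a) :
    ∫⁻ t in Icc a b, (‖Dp (max t 0)‖₊ : ℝ≥0∞) < ⊤ := by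
  rcases lt_or_ge b a with hba | hab
  · rw [Set.Icc_eq_empty_of_lt hba]; simp
  set fc := ext0 f with hfc_def
  have hfc : Continuous fc := continuous_ext0 hf.continuousOn
  set V := eVariationOn fc (Icc a (b+3)) with hV_def
  have hV : V < ⊤ := by
    rw [hV_def, eVariationOn.eq_of_eqOn (fun t ht => ext0_eq (ha.trans ht.1))]
    exact hf.evar_lt_top a (b+3) ha
  set g : ℕ → ℝ → ℝ := fun n t => ((n:ℝ)+1) * (fc (t + 1/((n:ℝ)+1)) - fc t) with hg_def
  have hgc : ∀ n, Continuous (g n) := fun n =>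
    continuous_const.mul ((hfc.comp (continuous_id.add continuous_const)).sub hfc)
  -- Step B : uniform bound
  have stepB : ∀ n : ℕ, ∫⁻ t in Icc a b, (‖g n t‖₊ : ℝ≥0∞) ≤ V := by
    intro n
    set hn : ℝ := 1/((n:ℝ)+1) with hhn
    have hn_pos : 0 < hn := by positivity
    have hn_le : hn ≤ 1 := by
      rw [hhn, div_le_one (by positivity)]; simp
    set K : ℕ := ⌈(b-a)/hn⌉₊ + 1 with hK
    set I : ℕ → Set ℝ := fun k => Ico (a + k*hn) (a + (k+1)*hn) with hI
    have cover : Icc a b ⊆ ⋃ k ∈ Finset.range K, I k := by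
      intro t ht
      have ht0 : 0 ≤ (t - a)/hn := by
        apply div_nonneg (by linarith [ht.1]) hn_pos.le
      refine Set.mem_iUnion.2 ⟨⌊(t-a)/hn⌋₊, Set.mem_iUnion.2 ⟨?_, ?_⟩⟩
      · rw [Finset.mem_range, hK]
        have h1 : ⌊(t-a)/hn⌋₊ ≤ ⌈(t-a)/hn⌉₊ := Nat.floor_le_ceil _
        have h2 : ⌈(t-a)/hn⌉₊ ≤ ⌈(b-a)/hn⌉₊ :=
          Nat.ceil_le_ceil (by apply div_le_div_of_nonneg_right (by linarith [ht.2]) hn_pos.le)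
        omega
      · constructor
        · have := Nat.floor_le ht0
          rw [le_div_iff₀ hn_pos] at this
          linarith
        · have := Nat.lt_floor_add_one ((t-a)/hn)
          rw [div_lt_iff₀ hn_pos] at this
          push_cast
          linarith
    have hdisj : Set.PairwiseDisjoint (↑(Finset.range K)) I := by
      intro i _ j _ hij
      have key : ∀ i j : ℕ, i < j → Disjoint (I i) (I j) := by
        intro i j hlt
        refine Set.disjoint_left.2 fun x hx hx' => ?_
        have h1 : a + (↑i+1)*hn ≤ a + ↑j*hn := by
          have : (↑i+1 : ℝ) ≤ ↑j := by exact_mod_cast hlt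
          nlinarith
        exact absurd (hx.2.trans_le (h1.trans hx'.1)) (lt_irrefl x)
      rcases hij.lt_or_gt with hlt | hlt
      · exact key i j hlt
      · exact (key j i hlt).symm
    have hF : Measurable (fun t : ℝ => (‖fc (t+hn) - fc t‖₊ : ℝ≥0∞)) :=
      ((hfc.comp (continuous_id.add continuous_const)).sub hfc).measurable.nnnorm.coe_nnreal_ennreal
    have hKbound : ∀ u : ℝ, 0 ≤ u → u ≤ hn → ∀ m : ℕ, m ≤ K → a + u + m*hn ≤ b + 3 := by
      intro u hu0 hu1 m hm
      have h1 : (m:ℝ) * hn ≤ (K:ℝ) * hn := by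
        apply mul_le_mul_of_nonneg_right (by exact_mod_cast hm) hn_pos.le
      have h2 : (K:ℝ) * hn < ((b-a)/hn + 2) * hn := by
        apply mul_lt_mul_of_pos_right ?_ hn_pos
        rw [hK]
        push_cast
        have := Nat.ceil_lt_add_one (show (0:ℝ) ≤ (b-a)/hn from div_nonneg (by linarith) hn_pos.le)
        linarith
      rw [div_add' _ _ _ hn_pos.ne', div_mul_cancel₀ _ hn_pos.ne'] at h2
      linarith
    have pointwise : ∀ u ∈ Ico (0:ℝ) hn,
        ∑ k ∈ Finset.range K, (‖fc (a + k*hn + u + hn) - fc (a + k*hn + u)‖₊ : ℝ≥0∞) ≤ V := by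
      intro u hu
      set w : ℕ → ℝ := fun k => min (a + u + k*hn) (b+3) with hw
      have hwmono : Monotone w := by
        intro k1 k2 hk
        apply min_le_min _ le_rfl
        have : (k1:ℝ) * hn ≤ (k2:ℝ) * hn :=
          mul_le_mul_of_nonneg_right (by exact_mod_cast hk) hn_pos.le
        linarith
      have hwmem : ∀ k, w k ∈ Icc a (b+3) := by
        intro k
        refine ⟨le_min ?_ (by linarith), min_le_right _ _⟩
        have : (0:ℝ) ≤ (k:ℝ) * hn := by positivity
        linarith [hu.1]
      have hweq : ∀ m : ℕ, m ≤ K → w m = a + u + m*hn := by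
        intro m hm
        exact min_eq_left (hKbound u hu.1 hu.2.le m hm)
      have hsum := eVariationOn.sum_le (f := fc) (n := K) hwmono hwmem
      rw [hV_def]
      refine le_trans (le_of_eq ?_) hsum
      apply Finset.sum_congr rfl
      intro k hk
      rw [Finset.mem_range] at hk
      rw [edist_eq_enorm_sub, enorm_eq_nnnorm, hweq k hk.le, hweq (k+1) hk]
      congr 2 <;> push_cast <;> ring
    calc ∫⁻ t in Icc a b, (‖g n t‖₊ : ℝ≥0∞)
        = ENNReal.ofReal ((n:ℝ)+1) * ∫⁻ t in Icc a b, (‖fc (t+hn) - fc t‖₊ : ℝ≥0∞) := by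
          rw [← lintegral_const_mul _ hF]
          apply lintegral_congr
          intro t
          rw [hg_def]
          simp only [nnnorm_mul, ENNReal.coe_mul]
          congr 1
          exact Real.enorm_eq_ofReal (by positivity)
      _ ≤ ENNReal.ofReal ((n:ℝ)+1) * (V * ENNReal.ofReal hn) := by
          apply mul_le_mul_right ?_ _
          calc ∫⁻ t in Icc a b, (‖fc (t+hn) - fc t‖₊ : ℝ≥0∞)
              ≤ ∫⁻ t in ⋃ k ∈ Finset.range K, I k, (‖fc (t+hn) - fc t‖₊ : ℝ≥0∞) :=
                lintegral_mono_set cover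
            _ = ∑ k ∈ Finset.range K, ∫⁻ t in I k, (‖fc (t+hn) - fc t‖₊ : ℝ≥0∞) :=
                lintegral_biUnion_finset hdisj (fun k _ => measurableSet_Ico) _
            _ = ∑ k ∈ Finset.range K, ∫⁻ u in Ico 0 hn,
                  (‖fc (a + k*hn + u + hn) - fc (a + k*hn + u)‖₊ : ℝ≥0∞) := by
                apply Finset.sum_congr rfl
                intro k _
                have hpre : (fun t => (a + k*hn) + t) ⁻¹' I k = Ico 0 hn := by
                  ext x
                  simp only [hI, Set.mem_preimage, Set.mem_Ico]
                  constructor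
                  · rintro ⟨h1, h2⟩
                    constructor
                    · linarith
                    · push_cast at h2; linarith
                  · rintro ⟨h1, h2⟩
                    constructor
                    · linarith
                    · push_cast; linarith
                have := lint_translate (fun t => (‖fc (t+hn) - fc t‖₊ : ℝ≥0∞)) hF
                  (a + k*hn) (I k) measurableSet_Ico
                rw [hpre] at this
                rw [← this]
            _ = ∫⁻ u in Ico 0 hn, ∑ k ∈ Finset.range K,
                  (‖fc (a + k*hn + u + hn) - fc (a + k*hn + u)‖₊ : ℝ≥0∞) := by
                rw [lintegral_finset_sum]
                intro k _
                exact hF.comp (measurable_const.add measurable_id)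
            _ ≤ ∫⁻ _ in Ico 0 hn, V := setLIntegral_mono measurable_const pointwise
            _ = V * ENNReal.ofReal hn := by
                rw [setLIntegral_const, Real.volume_Ico, sub_zero]
      _ = V := by
          rw [← mul_assoc, mul_comm (ENNReal.ofReal ((n:ℝ)+1)) V, mul_assoc,
            ← ENNReal.ofReal_mul (by positivity), hhn,
            mul_one_div_cancel (by positivity : ((n:ℝ)+1) ≠ 0)]
          simp
  have stepA : ∀ t ∈ Icc a b, (‖Dp (max t 0)‖₊ : ℝ≥0∞) =
      Filter.liminf (fun n => (‖g n t‖₊ : ℝ≥0∞)) Filter.atTop := by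
    intro t ht
    have ht0 : 0 ≤ t := ha.trans ht.1
    have h1 := tendsto_slopes hDp t ht0
    have h2 : Filter.Tendsto (fun n => (‖g n t‖₊ : ℝ≥0∞)) Filter.atTop
        (𝓝 (‖Dp t‖₊ : ℝ≥0∞)) := ENNReal.tendsto_coe.2 h1.nnnorm
    rw [max_eq_left ht0, h2.liminf_eq]
  calc ∫⁻ t in Icc a b, (‖Dp (max t 0)‖₊ : ℝ≥0∞)
      = ∫⁻ t in Icc a b, Filter.liminf (fun n => (‖g n t‖₊ : ℝ≥0∞)) Filter.atTop :=
        setLIntegral_congr_fun measurableSet_Icc stepA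
    _ ≤ Filter.liminf (fun n => ∫⁻ t in Icc a b, (‖g n t‖₊ : ℝ≥0∞)) Filter.atTop :=
        lintegral_liminf_le (fun n => (hgc n).measurable.nnnorm.coe_nnreal_ennreal)
    _ ≤ V := by
        refine le_trans (Filter.liminf_le_liminf (Filter.Eventually.of_forall stepB)) ?_
        rw [Filter.liminf_const]
    _ < ⊤ := hV

theorem ftc_right {f f' : ℝ → ℝ} (hcont : ContinuousOn f (Ici 0))
    (hder : ∀ t ∈ Ici (0:ℝ), HasDerivWithinAt f (f' t) (Ici t) t)
    {a b : ℝ} (ha : 0 ≤ a) (hab : a ≤ b) (hint : IntervalIntegrable f' volume a b) :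
    ∫ t in a..b, f' t = f b - f a :=
  intervalIntegral.integral_eq_sub_of_hasDeriv_right_of_le hab
    (hcont.mono (fun x hx => ha.trans hx.1))
    (fun x hx => (hder x (ha.trans hx.1.le)).mono Set.Ioi_subset_Ici_self) hint

theorem Dp_integrableOn {f Dp : ℝ → ℝ} (hf : AbsContOn f (Ici 0))
    (hDp : ∀ t ∈ Ici (0:ℝ), HasDerivWithinAt f (Dp t) (Ici t) t)
    {a b : ℝ} (ha : 0 ≤ a) : IntegrableOn Dp (Icc a b) := by
  have hq : Measurable (fun t => Dp (max t 0)) := measurable_extDp hf.continuousOn hDp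
  have hqint : IntegrableOn (fun t => Dp (max t 0)) (Icc a b) :=
    ⟨hq.aestronglyMeasurable.restrict, lint_Dp_lt_top hf hDp a b ha⟩
  exact hqint.congr_fun (fun t ht => by dsimp only; rw [max_eq_left (ha.trans ht.1)]) measurableSet_Icc

theorem box_succ_integral (j : ℕ) (G : ℝ → ℝ)
    (hint : IntegrableOn (fun p : ℝ × (Fin j → ℝ) => G (p.1 + ∑ i, p.2 i))
      ((Icc (0:ℝ) 1) ×ˢ (Set.univ.pi fun _ : Fin j => Icc (0:ℝ) 1))) :
    ∫ u in Set.univ.pi (fun _ : Fin (j+1) => Icc (0:ℝ) 1), G (∑ i, u i) =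
      ∫ u in Set.univ.pi (fun _ : Fin j => Icc (0:ℝ) 1),
        ∫ t in Icc (0:ℝ) 1, G (t + ∑ i, u i) := by
  set S : Set (ℝ × (Fin j → ℝ)) :=
    (Icc (0:ℝ) 1) ×ˢ (Set.univ.pi fun _ : Fin j => Icc (0:ℝ) 1) with hS
  set e := MeasurableEquiv.piFinSuccAbove (fun _ : Fin (j+1) => ℝ) 0 with he
  set g : ℝ × (Fin j → ℝ) → ℝ := fun p => G (p.1 + ∑ i, p.2 i) with hg
  have mp := MeasureTheory.volume_preserving_piFinSuccAbove (fun _ : Fin (j+1) => ℝ) 0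
  have hpre : Set.univ.pi (fun _ : Fin (j+1) => Icc (0:ℝ) 1) = e ⁻¹' S := by
    ext u
    simp only [hS, he, Set.mem_preimage, Set.mem_prod, Set.mem_pi, Set.mem_univ, forall_true_left,
      MeasurableEquiv.piFinSuccAbove_apply, Fin.zero_succAbove, Fin.insertNthEquiv,
      Equiv.coe_fn_symm_mk]
    rw [Fin.forall_fin_succ]
    simp [Fin.removeNth, Fin.tail]
  have hfun : ∀ u : Fin (j+1) → ℝ, G (∑ i, u i) = g (e u) := by
    intro u
    simp only [hg, he, MeasurableEquiv.piFinSuccAbove_apply, Fin.zero_succAbove,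
      Fin.insertNthEquiv, Equiv.coe_fn_symm_mk]
    rw [Fin.sum_univ_succ]
    simp [Fin.removeNth, Fin.tail]
  have hIg : Integrable g ((volume.restrict (Icc (0:ℝ) 1)).prod
      (volume.restrict (Set.univ.pi fun _ : Fin j => Icc (0:ℝ) 1))) := by
    rw [Measure.prod_restrict, ← Measure.volume_eq_prod]
    exact hint
  calc ∫ u in Set.univ.pi (fun _ : Fin (j+1) => Icc (0:ℝ) 1), G (∑ i, u i)
      = ∫ u in e ⁻¹' S, g (e u) := by
        rw [hpre]
        exact setIntegral_congr_fun (e.measurableSet_preimage.2 (by measurability))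
          (fun u _ => hfun u)
    _ = ∫ p in S, g p := mp.setIntegral_preimage_emb e.measurableEmbedding g S
    _ = ∫ t in Icc (0:ℝ) 1, ∫ u in Set.univ.pi (fun _ : Fin j => Icc (0:ℝ) 1), g (t, u) := by
        rw [hS, Measure.volume_eq_prod, ← Measure.prod_restrict]
        exact integral_prod g hIg
    _ = ∫ u in Set.univ.pi (fun _ : Fin j => Icc (0:ℝ) 1),
          ∫ t in Icc (0:ℝ) 1, G (t + ∑ i, u i) := by
        exact integral_integral_swap hIg

/-- Let `r ≥ 1` and let `h` have absolutely continuous derivatives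
`D 0 = h, D 1 = h', …, D (r-1) = h^{(r−1)}` on `[0,∞)`, with the right derivative
`Dp = h^{(r)}_+` of order `r` existing everywhere. Then for `g(x) = h(x/L)`,
`(Δ^r g)(k) = (−1)^r L^{−r} ∫_{[0,1]^r} h^{(r)}_+((k + u_1 + ⋯ + u_r)/L) du`. -/
theorem statement8 (r : ℕ) (hr : 1 ≤ r) (h : ℝ → ℝ) (D : ℕ → ℝ → ℝ) (Dp : ℝ → ℝ)
    (hD0 : D 0 = h)
    (hDeriv : ∀ k, k + 1 < r → ∀ t ∈ Set.Ici (0:ℝ),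
      HasDerivWithinAt (D k) (D (k + 1) t) (Set.Ici 0) t)
    (hAC : ∀ k, k < r → AbsContOn (D k) (Set.Ici 0))
    (hDp : ∀ t ∈ Set.Ici (0:ℝ), HasDerivWithinAt (D (r - 1)) (Dp t) (Set.Ici t) t) :
    ∀ L : ℕ, 1 ≤ L → ∀ k : ℕ,
      fdiff^[r] (fun x => h (x / (L : ℝ))) (k : ℝ) =
        (-1 : ℝ) ^ r * ((L : ℝ) ^ r)⁻¹ *
          ∫ u in Set.univ.pi (fun _ : Fin r => Set.Icc (0:ℝ) 1),
            Dp (((k : ℝ) + ∑ i, u i) / (L : ℝ)) := by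
  intro L hL k
  set c : ℝ := (L:ℝ) with hc_def
  have hc : 0 < c := by rw [hc_def]; exact_mod_cast hL
  have hDr1 : r - 1 < r := by omega
  set φ : ℕ → ℝ → ℝ := fun j => if j < r then D j else Dp with hφ
  have hφ_lt : ∀ j, j < r → φ j = D j := fun j hj => by simp [hφ, hj]
  have hφ_r : φ r = Dp := by simp [hφ]
  have contφ : ∀ j, j < r → ContinuousOn (φ j) (Ici 0) := fun j hj => by
    rw [hφ_lt j hj]; exact (hAC j hj).continuousOn
  have derφ : ∀ j, j + 1 ≤ r → ∀ t ∈ Ici (0:ℝ), HasDerivWithinAt (φ j) (φ (j+1) t) (Ici t) t := by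
    intro j hj t ht
    rcases lt_or_eq_of_le hj with hlt | heq
    · rw [hφ_lt j (by omega), hφ_lt (j+1) hlt]
      exact (hDeriv j hlt t ht).mono (Set.Ici_subset_Ici.2 ht)
    · have hj' : j = r - 1 := by omega
      rw [heq, hφ_r, hφ_lt j (by omega), hj']
      exact hDp t ht
  have intφ : ∀ j, j ≤ r → ∀ a b : ℝ, 0 ≤ a → IntegrableOn (φ j) (Icc a b) := by
    intro j hj a b ha
    rcases lt_or_eq_of_le hj with hlt | heq
    · rw [hφ_lt j hlt]
      exact ((hAC j hlt).continuousOn.mono (fun x hx => ha.trans hx.1)).integrableOn_Icc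
    · rw [heq, hφ_r]
      exact Dp_integrableOn (hAC (r-1) hDr1) hDp ha
  have FTCφ : ∀ j, j + 1 ≤ r → ∀ a b : ℝ, 0 ≤ a → a ≤ b →
      ∫ t in a..b, φ (j+1) t = φ j b - φ j a := by
    intro j hj a b ha hab
    apply ftc_right (contφ j (by omega)) (derφ j hj) ha hab
    rw [intervalIntegrable_iff_integrableOn_Icc_of_le hab]
    exact intφ (j+1) hj a b ha
  have bracket : ∀ j, j + 1 ≤ r → ∀ a : ℝ, 0 ≤ a →
      φ j (a/c) - φ j ((a+1)/c) = -(c⁻¹ * ∫ t in Icc (0:ℝ) 1, φ (j+1) ((a+t)/c)) := by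
    intro j hj a ha
    have h0 : (0:ℝ) ≤ a / c := by positivity
    have h1 : a / c ≤ (a+1)/c :=
      div_le_div_of_nonneg_right (by linarith) hc.le
    have key := FTCφ j hj (a/c) ((a+1)/c) h0 h1
    have e1 : ∫ t in Icc (0:ℝ) 1, φ (j+1) ((a+t)/c) = ∫ t in (0:ℝ)..1, φ (j+1) ((a+t)/c) := by
      rw [MeasureTheory.integral_Icc_eq_integral_Ioc,
        ← intervalIntegral.integral_of_le zero_le_one]
    have e2 : ∫ t in (0:ℝ)..1, φ (j+1) ((a+t)/c) = ∫ t in a..(a+1), φ (j+1) (t/c) := by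
      simpa using intervalIntegral.integral_comp_add_left (a := 0) (b := 1)
        (fun t => φ (j+1) (t/c)) a
    have e3 : ∫ t in a..(a+1), φ (j+1) (t/c) = c • ∫ t in (a/c)..((a+1)/c), φ (j+1) t :=
      intervalIntegral.integral_comp_div _ hc.ne'
    rw [e1, e2, e3, key]
    have : φ j ((a+1)/c) - φ j (a/c) = -(φ j (a/c) - φ j ((a+1)/c)) := by ring
    rw [smul_eq_mul, this]
    field_simp
  have boxmem : ∀ {j : ℕ} (u : Fin j → ℝ),
      u ∈ Set.univ.pi (fun _ : Fin j => Icc (0:ℝ) 1) → 0 ≤ ∑ i, u i := by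
    intro j u hu
    exact Finset.sum_nonneg (fun i _ => (hu i (Set.mem_univ i)).1)
  have boxmem' : ∀ {j : ℕ} (u : Fin j → ℝ),
      u ∈ Set.univ.pi (fun _ : Fin j => Icc (0:ℝ) 1) → ∑ i, u i ≤ j := by
    intro j u hu
    calc ∑ i, u i ≤ ∑ _i : Fin j, (1:ℝ) :=
          Finset.sum_le_sum (fun i _ => (hu i (Set.mem_univ i)).2)
      _ = j := by simp
  have boxmeas : ∀ j : ℕ, MeasurableSet (Set.univ.pi (fun _ : Fin j => Icc (0:ℝ) 1)) :=
    fun j => MeasurableSet.univ_pi (fun _ => measurableSet_Icc)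
  have sumcont : ∀ j : ℕ, ∀ x : ℝ, Continuous (fun u : Fin j → ℝ => (x + ∑ i, u i)/c) := by
    intro j x
    exact (continuous_const.add (continuous_finset_sum _ (fun i _ => continuous_apply i))).div_const c
  have ibox : ∀ j, j < r → ∀ x : ℝ, 0 ≤ x →
      IntegrableOn (fun u : Fin j → ℝ => φ j ((x + ∑ i, u i)/c))
        (Set.univ.pi fun _ : Fin j => Icc (0:ℝ) 1) := by
    intro j hj x hx
    apply ContinuousOn.integrableOn_compact (isCompact_univ_pi (fun _ => isCompact_Icc))
    apply (contφ j hj).comp (sumcont j x).continuousOn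
    intro u hu
    have := boxmem u hu
    exact div_nonneg (by linarith) hc.le
  have iprod : ∀ j, j + 1 ≤ r → ∀ x : ℝ, 0 ≤ x →
      IntegrableOn (fun p : ℝ × (Fin j → ℝ) => φ (j+1) ((x + (p.1 + ∑ i, p.2 i))/c))
        ((Icc (0:ℝ) 1) ×ˢ (Set.univ.pi fun _ : Fin j => Icc (0:ℝ) 1)) := by
    intro j hj x hx
    have hSmeas : MeasurableSet ((Icc (0:ℝ) 1) ×ˢ (Set.univ.pi fun _ : Fin j => Icc (0:ℝ) 1)) :=
      measurableSet_Icc.prod (boxmeas j)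
    have hmapc : Continuous (fun p : ℝ × (Fin j → ℝ) => (x + (p.1 + ∑ i, p.2 i))/c) :=
      (continuous_const.add (continuous_fst.add
        ((continuous_finset_sum _ (fun i _ => (continuous_apply i).comp continuous_snd))))).div_const c
    have hmem : ∀ p : ℝ × (Fin j → ℝ),
        p ∈ (Icc (0:ℝ) 1) ×ˢ (Set.univ.pi fun _ : Fin j => Icc (0:ℝ) 1) →
        0 ≤ (x + (p.1 + ∑ i, p.2 i))/c := by
      intro p hp
      have h1 := boxmem p.2 hp.2
      have h2 := hp.1.1
      exact div_nonneg (by linarith) hc.le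
    rcases lt_or_eq_of_le hj with hlt | heq
    · apply ContinuousOn.integrableOn_compact (isCompact_Icc.prod (isCompact_univ_pi (fun _ => isCompact_Icc)))
      exact (contφ (j+1) hlt).comp hmapc.continuousOn hmem
    · rw [heq, hφ_r]
      set q : ℝ → ℝ := fun t => Dp (max t 0) with hq
      have hqm : Measurable q := measurable_extDp (hAC (r-1) hDr1).continuousOn hDp
      have hqint : IntegrableOn (fun p : ℝ × (Fin j → ℝ) => q ((x + (p.1 + ∑ i, p.2 i))/c))
          ((Icc (0:ℝ) 1) ×ˢ (Set.univ.pi fun _ : Fin j => Icc (0:ℝ) 1)) := by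
        constructor
        · exact ((hqm.comp hmapc.measurable).aestronglyMeasurable).restrict
        · rw [HasFiniteIntegral]
          set N : ℝ → ℝ≥0∞ := fun s => (‖q (s/c)‖₊ : ℝ≥0∞) with hN
          have hNm : Measurable N := (hqm.comp (measurable_id.div_const c)).nnnorm.coe_nnreal_ennreal
          set M : ℝ≥0∞ := ENNReal.ofReal c *
            ∫⁻ s in Icc (0:ℝ) ((x + j + 1)/c), (‖Dp (max s 0)‖₊ : ℝ≥0∞) with hM
          have hMfin : M < ⊤ := by
            rw [hM]
            exact ENNReal.mul_lt_top ENNReal.ofReal_lt_top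
              (lint_Dp_lt_top (hAC (r-1) hDr1) hDp 0 ((x + j + 1)/c) le_rfl)
          have inner_bound : ∀ u : Fin j → ℝ,
              u ∈ Set.univ.pi (fun _ : Fin j => Icc (0:ℝ) 1) →
              ∫⁻ t in Icc (0:ℝ) 1, (‖q ((x + (t + ∑ i, u i))/c)‖₊ : ℝ≥0∞) ≤ M := by
            intro u hu
            have hsum0 := boxmem u hu
            have hsumj := boxmem' u hu
            set a0 : ℝ := x + ∑ i, u i with ha0
            have step1 : ∫⁻ t in Icc (0:ℝ) 1, (‖q ((x + (t + ∑ i, u i))/c)‖₊ : ℝ≥0∞)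
                = ∫⁻ t in Icc (0:ℝ) 1, N (a0 + t) := by
              apply lintegral_congr
              intro t
              rw [hN, ha0]
              congr 2
              ring
            have hpre : (fun t => a0 + t) ⁻¹' Icc a0 (a0 + 1) = Icc (0:ℝ) 1 := by
              ext t
              simp only [Set.mem_preimage, Set.mem_Icc]
              constructor <;> intro ht <;> constructor <;> [skip; skip; skip; skip] <;> linarith [ht.1, ht.2]
            have step2 : ∫⁻ t in Icc (0:ℝ) 1, N (a0 + t) = ∫⁻ s in Icc a0 (a0 + 1), N s := by
              rw [← hpre]
              exact lint_translate N hNm a0 _ measurableSet_Icc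
            have step3 : ∫⁻ s in Icc a0 (a0 + 1), N s ≤ ∫⁻ s in Icc 0 (x + j + 1), N s := by
              apply lintegral_mono_set
              apply Set.Icc_subset_Icc
              · rw [ha0]; linarith
              · rw [ha0]; linarith
            have step4 : ∫⁻ s in Icc (0:ℝ) (x + j + 1), N s = M := by
              have := lint_scale (fun s => (‖q s‖₊ : ℝ≥0∞))
                (hqm.nnnorm.coe_nnreal_ennreal) hc 0 (x + j + 1)
              rw [zero_div] at this
              rw [hM, ← this]
            rw [step1, step2]
            exact step3.trans_eq step4
          calc ∫⁻ p in (Icc (0:ℝ) 1) ×ˢ (Set.univ.pi fun _ : Fin j => Icc (0:ℝ) 1),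
                (‖q ((x + (p.1 + ∑ i, p.2 i))/c)‖₊ : ℝ≥0∞)
              = ∫⁻ u in Set.univ.pi (fun _ : Fin j => Icc (0:ℝ) 1),
                  ∫⁻ t in Icc (0:ℝ) 1, (‖q ((x + (t + ∑ i, u i))/c)‖₊ : ℝ≥0∞) := by
                rw [Measure.volume_eq_prod, ← Measure.prod_restrict]
                exact lintegral_prod_symm _
                  ((hqm.comp hmapc.measurable).nnnorm.coe_nnreal_ennreal).aemeasurable
            _ ≤ ∫⁻ _ in Set.univ.pi (fun _ : Fin j => Icc (0:ℝ) 1), M :=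
                setLIntegral_mono' (boxmeas j) inner_bound
            _ = M * volume (Set.univ.pi (fun _ : Fin j => Icc (0:ℝ) 1)) := setLIntegral_const _ _
            _ < ⊤ := by
                rw [volume_pi_pi]
                simp only [Real.volume_Icc, sub_zero, ENNReal.ofReal_one, Finset.prod_const_one,
                  mul_one]
                exact hMfin
      apply hqint.congr_fun ?_ hSmeas
      intro p hp
      rw [hq]
      simp only
      rw [max_eq_left (hmem p hp)]
  have REC : ∀ j, j + 1 ≤ r → ∀ x : ℝ, 0 ≤ x →
      (∫ u in Set.univ.pi (fun _ : Fin j => Icc (0:ℝ) 1), φ j ((x + ∑ i, u i)/c)) -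
        (∫ u in Set.univ.pi (fun _ : Fin j => Icc (0:ℝ) 1), φ j ((x + 1 + ∑ i, u i)/c)) =
      -(c⁻¹ * ∫ u in Set.univ.pi (fun _ : Fin (j+1) => Icc (0:ℝ) 1),
          φ (j+1) ((x + ∑ i, u i)/c)) := by
    intro j hj x hx
    have hInt1 := ibox j (by omega) x hx
    have hInt2 := ibox j (by omega) (x+1) (by linarith)
    rw [← integral_sub hInt1 hInt2]
    have step2 : ∫ u in Set.univ.pi (fun _ : Fin j => Icc (0:ℝ) 1),
        (φ j ((x + ∑ i, u i)/c) - φ j ((x + 1 + ∑ i, u i)/c)) =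
        ∫ u in Set.univ.pi (fun _ : Fin j => Icc (0:ℝ) 1),
          -(c⁻¹ * ∫ t in Icc (0:ℝ) 1, φ (j+1) ((x + (t + ∑ i, u i))/c)) := by
      apply setIntegral_congr_fun (boxmeas j)
      intro u hu
      have hb := bracket j hj (x + ∑ i, u i) (add_nonneg hx (boxmem u hu))
      dsimp only
      rw [show x + 1 + ∑ i, u i = x + ∑ i, u i + 1 by ring]
      rw [hb]
      congr 1
      congr 1
      apply integral_congr_ae
      filter_upwards with t
      congr 1
      ring
    rw [step2, integral_neg, integral_const_mul]
    rw [← box_succ_integral j (fun s => φ (j+1) ((x + s)/c)) (iprod j hj x hx)]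
  have MAIN : ∀ j, j ≤ r → ∀ x : ℝ, 0 ≤ x →
      fdiff^[j] (fun y => h (y/c)) x = (-1:ℝ)^j * (c^j)⁻¹ *
        ∫ u in Set.univ.pi (fun _ : Fin j => Icc (0:ℝ) 1), φ j ((x + ∑ i, u i)/c) := by
    intro j
    induction j with
    | zero =>
      intro _ x hx
      have hbox0 : (Set.univ.pi (fun _ : Fin 0 => Icc (0:ℝ) 1)) = Set.univ := by
        ext u
        simp
      rw [Function.iterate_zero_apply, hbox0, setIntegral_univ]
      have : ∀ u : Fin 0 → ℝ, φ 0 ((x + ∑ i, u i)/c) = h (x/c) := by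
        intro u
        rw [hφ_lt 0 (by omega), hD0]
        congr 1
        simp
      rw [integral_congr_ae (Filter.Eventually.of_forall this), integral_const]
      have hvol : (volume : Measure (Fin 0 → ℝ)) Set.univ = 1 := by
        rw [MeasureTheory.volume_pi, Measure.pi_univ]
        simp
      rw [measureReal_def, hvol]
      simp
    | succ j ih =>
      intro hj x hx
      rw [Function.iterate_succ_apply']
      have hfd : fdiff (fdiff^[j] (fun y => h (y/c))) x =
          fdiff^[j] (fun y => h (y/c)) x - fdiff^[j] (fun y => h (y/c)) (x+1) := rfl
      rw [hfd, ih (by omega) x hx, ih (by omega) (x+1) (by linarith)]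
      have hrec := REC j hj x hx
      have hpow : ((-1:ℝ))^(j+1) = (-1)^j * (-1) := pow_succ _ _
      have hcpow : (c^(j+1))⁻¹ = (c^j)⁻¹ * c⁻¹ := by rw [pow_succ, mul_inv]
      rw [hpow, hcpow]
      linear_combination ((-1:ℝ))^j * (c^j)⁻¹ * hrec
  have final := MAIN r le_rfl (k:ℝ) (Nat.cast_nonneg k)
  rw [hφ_r] at final
  exact final


end
end

section
/- Let r ≥ 1 be an integer and let h be a filter belonging to W^rBV. Then for every integer L ≥ 1, Σ_{k=0}^{2L} |(Δ^{r+1} g)(k)| ≤ L^{−r} ‖h^{(r)}_+‖_{BV}, where g(x) = h(x/L) and ‖h^{(r)}_+‖_{BV} denotes the total variation of the right derivative h^{(r)}_+ of h of order r on [0,∞). -/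
open MeasureTheory Metric Set
open scoped ENNReal NNReal

noncomputable section

attribute [local instance] Classical.propDecidable

/-- Let `r ≥ 1` and let `h` be a filter belonging to `W^rBV` on `[0,∞)`,
with derivatives `D 0 = h, …, D (r-1) = h^{(r−1)}` and one-sided `r`-th order derivatives
`Dp = h^{(r)}_+`, `Dm = h^{(r)}_-` of bounded variation. Then for every `L ≥ 1`,
`Σ_{k=0}^{2L} |(Δ^{r+1} g)(k)| ≤ L^{−r} ‖h^{(r)}_+‖_{BV}` where `g(x) = h(x/L)` and
`‖·‖_{BV}` is the total variation on `[0,∞)`. -/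
theorem statement9 (r : ℕ) (hr : 1 ≤ r) (h : ℝ → ℝ) (hfil : IsFilter h)
    (D : ℕ → ℝ → ℝ) (Dp Dm : ℝ → ℝ) (hD0 : D 0 = h)
    (hDeriv : ∀ k, k + 1 < r → ∀ t ∈ Set.Ici (0:ℝ),
      HasDerivWithinAt (D k) (D (k + 1) t) (Set.Ici 0) t)
    (hAC : ∀ k, k < r → AbsContOn (D k) (Set.Ici 0))
    (hDp : ∀ t ∈ Set.Ici (0:ℝ), HasDerivWithinAt (D (r - 1)) (Dp t) (Set.Ici t) t)
    (hDm : ∀ t ∈ Set.Ici (0:ℝ), HasDerivWithinAt (D (r - 1)) (Dm t) (Set.Ici 0 ∩ Set.Iic t) t)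
    (hBVp : BoundedVariationOn Dp (Set.Ici 0))
    (hBVm : BoundedVariationOn Dm (Set.Ici 0)) :
    ∀ L : ℕ, 1 ≤ L →
      ∑ k ∈ Finset.range (2 * L + 1), |fdiff^[r + 1] (fun x => h (x / (L : ℝ))) (k : ℝ)| ≤
        ((L : ℝ) ^ r)⁻¹ * (eVariationOn Dp (Set.Ici 0)).toReal := by
  intro L hL
  have hL0 : (0:ℝ) < (L:ℝ) := by exact_mod_cast hL
  set F : ℕ → ℝ → ℝ :=
    fun j x => (((L:ℝ))^j)⁻¹ * (if j = r then Dp else D j) (x / (L:ℝ)) with hFdef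
  -- derivatives of the (unscaled) chain
  have hEderiv : ∀ j, j < r → ∀ t : ℝ, 0 ≤ t →
      HasDerivWithinAt (if j = r then Dp else D j)
        ((if j + 1 = r then Dp else D (j+1)) t) (Set.Ici t) t := by
    intro j hj t ht
    rcases eq_or_lt_of_le (Nat.succ_le_of_lt hj) with hjr | hjr
    · rw [if_neg (by omega), if_pos hjr]
      have hj1 : j = r - 1 := by omega
      rw [hj1]
      exact hDp t ht
    · rw [if_neg (by omega), if_neg (by omega)]
      exact (hDeriv j (by omega) t ht).mono (Set.Ici_subset_Ici.2 ht)
  have hEcont : ∀ j, j < r → ContinuousOn (if j = r then Dp else D j) (Set.Ici 0) := by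
    intro j hj
    rw [if_neg (by omega)]
    rcases eq_or_lt_of_le (Nat.succ_le_of_lt hj) with hjr | hjr
    · have hj1 : j = r - 1 := by omega
      rw [hj1]
      intro t ht
      have h1 := (hDp t ht).continuousWithinAt
      have h2 := (hDm t ht).continuousWithinAt
      refine (h1.union h2).mono ?_
      intro y hy
      rcases le_total t y with h4 | h4
      · exact Or.inl h4
      · exact Or.inr ⟨hy, h4⟩
    · intro t ht
      exact (hDeriv j (by omega) t ht).continuousWithinAt
  have hFderiv : ∀ j, j < r → ∀ t : ℝ, 0 ≤ t →
      HasDerivWithinAt (F j) (F (j+1) t) (Set.Ici t) t := by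
    intro j hj t ht
    have hinner : HasDerivWithinAt (fun x : ℝ => x / (L:ℝ)) (1 / (L:ℝ)) (Set.Ici t) t := by
      simpa using (hasDerivWithinAt_id t (Set.Ici t)).div_const (L:ℝ)
    have houter := hEderiv j hj (t / (L:ℝ)) (by positivity)
    have hmaps : Set.MapsTo (fun x : ℝ => x / (L:ℝ)) (Set.Ici t) (Set.Ici (t / (L:ℝ))) := by
      intro y hy
      exact (div_le_div_iff_of_pos_right hL0).2 hy
    have hcomp := HasDerivWithinAt.comp t houter hinner hmaps
    have hval : F (j+1) t =
        (((L:ℝ))^j)⁻¹ * ((if j + 1 = r then Dp else D (j+1)) (t / (L:ℝ)) * (1 / (L:ℝ))) := by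
      simp only [hFdef]
      rw [pow_succ, mul_inv]
      ring
    rw [hval]
    exact HasDerivWithinAt.const_mul _ hcomp
  have hFcont : ∀ j, j < r → ContinuousOn (F j) (Set.Ici 0) := by
    intro j hj
    apply continuousOn_const.mul
    exact (hEcont j hj).comp (continuous_id.div_const (L:ℝ)).continuousOn
      (fun y hy => div_nonneg hy hL0.le)
  have hFint : ∀ j, j ≤ r → ∀ x : ℝ, 0 ≤ x → IntervalIntegrable (F j) volume x (x+1) := by
    intro j hj x hx
    rcases eq_or_lt_of_le hj with hjr | hjr
    · -- j = r : bounded variation, difference of monotone functions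
      obtain ⟨p, q, hp, hq, hpq⟩ :=
        hBVp.locallyBoundedVariationOn.exists_monotoneOn_sub_monotoneOn
      have hFr : F j = fun y => (((L:ℝ))^j)⁻¹ * (p (y / (L:ℝ)) - q (y / (L:ℝ))) := by
        funext y
        simp only [hFdef, if_pos hjr, hpq, Pi.sub_apply]
      have hmemIcc : ∀ a : ℝ, a ∈ Set.uIcc x (x+1) → 0 ≤ a / (L:ℝ) := by
        intro a ha
        rw [Set.uIcc_of_le (by linarith)] at ha
        exact div_nonneg (by linarith [ha.1]) hL0.le
      have hintp : IntervalIntegrable (fun y => p (y / (L:ℝ))) volume x (x+1) := by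
        apply MonotoneOn.intervalIntegrable
        intro a ha b hb hab
        exact hp (hmemIcc a ha) (hmemIcc b hb) ((div_le_div_iff_of_pos_right hL0).2 hab)
      have hintq : IntervalIntegrable (fun y => q (y / (L:ℝ))) volume x (x+1) := by
        apply MonotoneOn.intervalIntegrable
        intro a ha b hb hab
        exact hq (hmemIcc a ha) (hmemIcc b hb) ((div_le_div_iff_of_pos_right hL0).2 hab)
      rw [hFr]
      exact (hintp.sub hintq).const_mul _
    · apply ContinuousOn.intervalIntegrable
      apply (hFcont j hjr).mono
      rw [Set.uIcc_of_le (by linarith)]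
      intro y hy
      exact le_trans hx hy.1
  have hFintShift : ∀ j, j ≤ r → ∀ c : ℝ, 0 ≤ c →
      IntervalIntegrable (fun t => F j (c + t)) volume 0 1 := by
    intro j hj c hc
    have := (hFint j hj c hc).comp_add_left c
    rwa [sub_self, add_sub_cancel_left] at this
  have hIterInt : ∀ j, j ≤ r → ∀ m : ℕ, ∀ c : ℝ, 0 ≤ c →
      IntervalIntegrable (fun t => fdiff^[m] (F j) (c + t)) volume 0 1 := by
    intro j hj m
    induction m with
    | zero => simpa using hFintShift j hj
    | succ m ih =>
      intro c hc
      have h1 : (fun t => fdiff^[m+1] (F j) (c + t)) =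
          fun t => fdiff^[m] (F j) (c + t) - fdiff^[m] (F j) ((c+1) + t) := by
        funext t
        rw [Function.iterate_succ_apply']
        show fdiff^[m] (F j) (c + t) - fdiff^[m] (F j) (c + t + 1) = _
        rw [show c + t + 1 = (c + 1) + t by ring]
      rw [h1]
      exact (ih c hc).sub (ih (c+1) (by linarith))
  have hFTC : ∀ j, j < r → ∀ x : ℝ, 0 ≤ x →
      ∫ t in x..(x+1), F (j+1) t = F j (x+1) - F j x := by
    intro j hj x hx
    apply intervalIntegral.integral_eq_sub_of_hasDeriv_right_of_le (by linarith)
    · exact (hFcont j hj).mono (fun y hy => le_trans hx hy.1)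
    · intro y hy
      exact (hFderiv j hj y (by linarith [hy.1])).mono Set.Ioi_subset_Ici_self
    · exact hFint (j+1) (by omega) x hx
  have hRep : ∀ j, j < r → ∀ m : ℕ, ∀ x : ℝ, 0 ≤ x →
      fdiff^[m+1] (F j) x = -∫ t in (0:ℝ)..1, fdiff^[m] (F (j+1)) (x + t) := by
    intro j hj m
    induction m with
    | zero =>
      intro x hx
      simp only [zero_add, Function.iterate_one, Function.iterate_zero, id_eq]
      rw [intervalIntegral.integral_comp_add_left (F (j+1)) x, add_zero,
        hFTC j hj x hx]
      simp only [fdiff]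
      ring
    | succ m ih =>
      intro x hx
      have h1 : ∀ t : ℝ, fdiff^[m+1] (F (j+1)) (x + t) =
          fdiff^[m] (F (j+1)) (x + t) - fdiff^[m] (F (j+1)) ((x+1) + t) := by
        intro t
        rw [Function.iterate_succ_apply']
        show fdiff^[m] (F (j+1)) (x + t) - fdiff^[m] (F (j+1)) (x + t + 1) = _
        rw [show x + t + 1 = (x + 1) + t by ring]
      calc fdiff^[m+1+1] (F j) x
          = fdiff^[m+1] (F j) x - fdiff^[m+1] (F j) (x+1) := by
            rw [Function.iterate_succ_apply']
            rfl
        _ = (-∫ t in (0:ℝ)..1, fdiff^[m] (F (j+1)) (x + t)) -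
            (-∫ t in (0:ℝ)..1, fdiff^[m] (F (j+1)) ((x+1) + t)) := by
            rw [ih x hx, ih (x+1) (by linarith)]
        _ = -∫ t in (0:ℝ)..1,
              (fdiff^[m] (F (j+1)) (x + t) - fdiff^[m] (F (j+1)) ((x+1) + t)) := by
            rw [intervalIntegral.integral_sub
              (hIterInt (j+1) (by omega) m x hx)
              (hIterInt (j+1) (by omega) m (x+1) (by linarith))]
            ring
        _ = -∫ t in (0:ℝ)..1, fdiff^[m+1] (F (j+1)) (x + t) := by
            congr 1
            apply intervalIntegral.integral_congr
            intro t _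
            exact (h1 t).symm
  have key : ∀ m j, j + m = r → ∀ s : ℝ, 0 ≤ s →
      ∑ k ∈ Finset.range (2*L+1), |fdiff^[m+1] (F j) ((k:ℝ) + s)| ≤
        ((L:ℝ)^r)⁻¹ * (eVariationOn Dp (Set.Ici 0)).toReal := by
    intro m
    induction m with
    | zero =>
      intro j hj s hs
      have hjr : j = r := by omega
      subst hjr
      set u : ℕ → ℝ := fun i => ((i:ℝ) + s) / (L:ℝ) with hu
      have hterm : ∀ k : ℕ, |fdiff^[0+1] (F j) ((k:ℝ) + s)| =
          (((L:ℝ))^j)⁻¹ * |Dp (u k) - Dp (u (k+1))| := by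
        intro k
        simp only [zero_add, Function.iterate_one, fdiff, hFdef, if_pos rfl, hu]
        rw [← mul_sub, abs_mul, abs_inv, abs_pow, abs_of_pos hL0]
        congr 3
        push_cast
        ring
      have hmono : Monotone u := by
        intro a b hab
        exact (div_le_div_iff_of_pos_right hL0).2 (add_le_add_left (Nat.cast_le.2 hab) s)
      have hmem : ∀ i, u i ∈ Set.Ici (0:ℝ) :=
        fun i => div_nonneg (add_nonneg (Nat.cast_nonneg i) hs) hL0.le
      have hsum := eVariationOn.sum_le (f := Dp) (n := 2*L+1) hmono hmem
      have h2 : ∑ k ∈ Finset.range (2*L+1), |Dp (u k) - Dp (u (k+1))| ≤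
          (eVariationOn Dp (Set.Ici 0)).toReal := by
        have h3 : ∑ k ∈ Finset.range (2*L+1), |Dp (u k) - Dp (u (k+1))| =
            (∑ k ∈ Finset.range (2*L+1), edist (Dp (u (k+1))) (Dp (u k))).toReal := by
          rw [ENNReal.toReal_sum (fun a _ => edist_ne_top _ _)]
          apply Finset.sum_congr rfl
          intro k _
          rw [edist_dist, ENNReal.toReal_ofReal dist_nonneg, Real.dist_eq, abs_sub_comm]
        rw [h3]
        exact ENNReal.toReal_mono hBVp hsum
      calc ∑ k ∈ Finset.range (2*L+1), |fdiff^[0+1] (F j) ((k:ℝ) + s)|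
          = ∑ k ∈ Finset.range (2*L+1), (((L:ℝ))^j)⁻¹ * |Dp (u k) - Dp (u (k+1))| :=
            Finset.sum_congr rfl (fun k _ => hterm k)
        _ = (((L:ℝ))^j)⁻¹ * ∑ k ∈ Finset.range (2*L+1), |Dp (u k) - Dp (u (k+1))| :=
            (Finset.mul_sum _ _ _).symm
        _ ≤ (((L:ℝ))^j)⁻¹ * (eVariationOn Dp (Set.Ici 0)).toReal :=
            mul_le_mul_of_nonneg_left h2 (by positivity)
    | succ m ih =>
      intro j hj s hs
      have hjr : j < r := by omega
      have hstep : ∀ k : ℕ, |fdiff^[m+1+1] (F j) ((k:ℝ) + s)| ≤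
          ∫ t in (0:ℝ)..1, |fdiff^[m+1] (F (j+1)) (((k:ℝ) + s) + t)| := by
        intro k
        rw [hRep j hjr (m+1) ((k:ℝ) + s) (add_nonneg (Nat.cast_nonneg k) hs), abs_neg]
        exact intervalIntegral.abs_integral_le_integral_abs zero_le_one
      have hintk : ∀ k : ℕ,
          IntervalIntegrable (fun t => |fdiff^[m+1] (F (j+1)) (((k:ℝ) + s) + t)|)
            volume 0 1 :=
        fun k => (hIterInt (j+1) (by omega) (m+1) ((k:ℝ) + s)
          (add_nonneg (Nat.cast_nonneg k) hs)).abs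
      have hintsum : IntervalIntegrable
          (fun t => ∑ k ∈ Finset.range (2*L+1),
            |fdiff^[m+1] (F (j+1)) (((k:ℝ) + s) + t)|) volume 0 1 := by
        have := IntervalIntegrable.sum (Finset.range (2*L+1))
          (f := fun k (t : ℝ) => |fdiff^[m+1] (F (j+1)) (((k:ℝ) + s) + t)|)
          (fun k _ => hintk k)
        have heq : (∑ k ∈ Finset.range (2*L+1),
            fun (t : ℝ) => |fdiff^[m+1] (F (j+1)) (((k:ℝ) + s) + t)|) =
            fun t => ∑ k ∈ Finset.range (2*L+1),
              |fdiff^[m+1] (F (j+1)) (((k:ℝ) + s) + t)| := by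
          funext t
          simp
        rwa [heq] at this
      calc ∑ k ∈ Finset.range (2*L+1), |fdiff^[m+1+1] (F j) ((k:ℝ) + s)|
          ≤ ∑ k ∈ Finset.range (2*L+1),
              ∫ t in (0:ℝ)..1, |fdiff^[m+1] (F (j+1)) (((k:ℝ) + s) + t)| :=
            Finset.sum_le_sum (fun k _ => hstep k)
        _ = ∫ t in (0:ℝ)..1, ∑ k ∈ Finset.range (2*L+1),
              |fdiff^[m+1] (F (j+1)) (((k:ℝ) + s) + t)| :=
            (intervalIntegral.integral_finset_sum (fun k _ => hintk k)).symm
        _ ≤ ∫ t in (0:ℝ)..1,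
              ((L:ℝ)^r)⁻¹ * (eVariationOn Dp (Set.Ici 0)).toReal := by
            apply intervalIntegral.integral_mono_on zero_le_one hintsum
              intervalIntegrable_const
            intro t ht
            have hres := ih (j+1) (by omega) (s + t) (add_nonneg hs ht.1)
            refine le_trans (le_of_eq ?_) hres
            apply Finset.sum_congr rfl
            intro k _
            rw [add_assoc]
        _ = ((L:ℝ)^r)⁻¹ * (eVariationOn Dp (Set.Ici 0)).toReal := by simp
  have hF0 : (fun x => h (x / (L:ℝ))) = F 0 := by
    funext x
    simp only [hFdef, pow_zero, inv_one, one_mul, if_neg (by omega : ¬ (0:ℕ) = r), hD0]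
  rw [hF0]
  have hfin := key r 0 (by omega) 0 le_rfl
  simpa using hfin

end
end

section
/- Let a > 0 and define f : [0,3] → ℝ by f(t) = (max(1 − t/2, 0))^a. Then f belongs to W^{⌊a⌋}BV[0,3], but f does not belong to C^{⌊a+1⌋}[0,3] (i.e. f is not ⌊a+1⌋ times continuously differentiable on [0,3]). -/
open MeasureTheory Metric Set
open scoped ENNReal NNReal

noncomputable section

attribute [local instance] Classical.propDecidable

namespace Stmt11

open Filter Topology

noncomputable def FF (β : ℝ) (t : ℝ) : ℝ := max (1 - t / 2) 0 ^ β

noncomputable def cc (a : ℝ) (k : ℕ) : ℝ := ∏ i ∈ Finset.range k, (-(a - i) / 2)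

lemma cc_zero (a : ℝ) : cc a 0 = 1 := Finset.prod_range_zero _

lemma cc_succ (a : ℝ) (k : ℕ) : cc a (k + 1) = cc a k * (-(a - k) / 2) :=
  Finset.prod_range_succ _ _

lemma cc_ne_zero {a : ℝ} {k : ℕ} (h : ∀ i : ℕ, i < k → (i : ℝ) < a) : cc a k ≠ 0 := by
  unfold cc
  rw [Finset.prod_ne_zero_iff]
  intro i hi
  have h1 : (i : ℝ) < a := h i (Finset.mem_range.mp hi)
  intro hcon
  rw [div_eq_zero_iff] at hcon
  rcases hcon with hc | hc
  · rw [neg_eq_zero] at hc; linarith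
  · norm_num at hc

lemma FF_of_le {β t : ℝ} (ht : t ≤ 2) : FF β t = (1 - t / 2) ^ β := by
  unfold FF; rw [max_eq_left (by linarith)]

lemma FF_of_ge {β t : ℝ} (hβ : 0 < β) (ht : 2 ≤ t) : FF β t = 0 := by
  unfold FF; rw [max_eq_right (by linarith), Real.zero_rpow hβ.ne']

lemma hasDerivAt_aux {β t : ℝ} (h : 1 - t / 2 ≠ 0 ∨ 1 ≤ β) :
    HasDerivAt (fun t : ℝ => (1 - t / 2) ^ β) (-(β / 2) * (1 - t / 2) ^ (β - 1)) t := by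
  have h1 : HasDerivAt (fun t : ℝ => 1 - t / 2) (-(1 / 2)) t := by
    simpa using ((hasDerivAt_id t).div_const 2).const_sub 1
  have h2 := (Real.hasDerivAt_rpow_const (x := 1 - t / 2) (p := β) h).comp t h1
  simp only [Function.comp_def] at h2
  refine h2.congr_deriv ?_
  ring

lemma FF_hasDerivAt_lt {β t : ℝ} (ht : t < 2) :
    HasDerivAt (FF β) (-(β / 2) * (1 - t / 2) ^ (β - 1)) t := by
  apply (hasDerivAt_aux (Or.inl (by intro hc; nlinarith))).congr_of_eventuallyEq
  filter_upwards [Iio_mem_nhds ht] with s hs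
  exact FF_of_le hs.le

lemma FF_hasDerivWithinAt_Iic {β : ℝ} (hβ : 1 ≤ β) {t : ℝ} (ht : t ≤ 2) :
    HasDerivWithinAt (FF β) (-(β / 2) * (1 - t / 2) ^ (β - 1)) (Set.Iic 2) t :=
  (hasDerivAt_aux (Or.inr hβ)).hasDerivWithinAt.congr (fun s hs => FF_of_le hs)
    (FF_of_le ht)

lemma FF_hasDerivWithinAt_Ici {β : ℝ} (hβ : 0 < β) {t : ℝ} (ht : 2 ≤ t) :
    HasDerivWithinAt (FF β) 0 (Set.Ici 2) t :=
  (hasDerivWithinAt_const _ _ _).congr (fun s hs => FF_of_ge hβ hs) (FF_of_ge hβ ht)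

lemma FF_hasDerivAt {β : ℝ} (hβ : 1 < β) (t : ℝ) :
    HasDerivAt (FF β) (-(β / 2) * FF (β - 1) t) t := by
  rcases lt_trichotomy t 2 with h | h | h
  · rw [show FF (β - 1) t = (1 - t / 2) ^ (β - 1) from FF_of_le h.le]
    exact FF_hasDerivAt_lt h
  · subst h
    rw [FF_of_ge (by linarith) le_rfl, mul_zero]
    have hl : HasDerivWithinAt (FF β) 0 (Set.Iic 2) 2 := by
      have h0 := FF_hasDerivWithinAt_Iic hβ.le (le_refl (2:ℝ))
      norm_num [Real.zero_rpow (show β - 1 ≠ 0 by linarith)] at h0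
      exact h0
    have hr := FF_hasDerivWithinAt_Ici (show (0:ℝ) < β by linarith) (le_refl (2:ℝ))
    have hu := hl.union hr
    rw [Set.Iic_union_Ici] at hu
    exact hasDerivWithinAt_univ.mp hu
  · rw [FF_of_ge (by linarith) h.le, mul_zero]
    apply (hasDerivAt_const t (0:ℝ)).congr_of_eventuallyEq
    filter_upwards [Ioi_mem_nhds h] with s hs
    exact FF_of_ge (by linarith) hs.le

lemma FF_lip {β : ℝ} (hβ : 1 ≤ β) :
    ∀ x ∈ Set.Icc (0:ℝ) 3, ∀ y ∈ Set.Icc (0:ℝ) 3, |FF β x - FF β y| ≤ β * |x - y| := by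
  have key : ∀ x ∈ Set.Icc (0:ℝ) 2, ∀ y ∈ Set.Icc (0:ℝ) 2,
      |FF β x - FF β y| ≤ β * |x - y| := by
    intro x hx y hy
    have hder : ∀ z ∈ Set.Icc (0:ℝ) 2,
        HasDerivWithinAt (FF β) (-(β / 2) * (1 - z / 2) ^ (β - 1)) (Set.Icc 0 2) z :=
      fun z hz => (FF_hasDerivWithinAt_Iic hβ hz.2).mono Set.Icc_subset_Iic_self
    have hbound : ∀ z ∈ Set.Icc (0:ℝ) 2, ‖-(β / 2) * (1 - z / 2) ^ (β - 1)‖ ≤ β := by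
      intro z hz
      have h0 : (0:ℝ) ≤ 1 - z / 2 := by linarith [hz.2]
      have h1 : (1 - z / 2 : ℝ) ≤ 1 := by linarith [hz.1]
      have h2 : (1 - z / 2 : ℝ) ^ (β - 1) ≤ 1 := Real.rpow_le_one h0 h1 (by linarith)
      have h3 : (0:ℝ) ≤ (1 - z / 2) ^ (β - 1) := Real.rpow_nonneg h0 _
      rw [Real.norm_eq_abs, abs_mul, abs_neg, abs_of_nonneg (by linarith : (0:ℝ) ≤ β / 2),
        abs_of_nonneg h3]
      nlinarith
    have := (convex_Icc (0:ℝ) 2).norm_image_sub_le_of_norm_hasDerivWithin_le hder hbound hy hx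
    simpa [Real.norm_eq_abs] using this
  intro x hx y hy
  rcases le_total x 2 with h1 | h1 <;> rcases le_total y 2 with h2 | h2
  · exact key x ⟨hx.1, h1⟩ y ⟨hy.1, h2⟩
  · have hFy : FF β y = 0 := FF_of_ge (by linarith) h2
    have hF2 : FF β 2 = 0 := FF_of_ge (by linarith) le_rfl
    have hk := key x ⟨hx.1, h1⟩ 2 (by norm_num)
    rw [hF2] at hk
    rw [hFy]
    have hxy : |x - 2| ≤ |x - y| := by
      rw [abs_of_nonpos (by linarith), abs_of_nonpos (by linarith)]; linarith
    calc |FF β x - 0| ≤ β * |x - 2| := hk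
      _ ≤ β * |x - y| := mul_le_mul_of_nonneg_left hxy (by linarith)
  · have hFx : FF β x = 0 := FF_of_ge (by linarith) h1
    have hF2 : FF β 2 = 0 := FF_of_ge (by linarith) le_rfl
    have hk := key 2 (by norm_num) y ⟨hy.1, h2⟩
    rw [hF2] at hk
    rw [hFx]
    have hxy : |2 - y| ≤ |x - y| := by
      rw [abs_of_nonneg (by linarith), abs_of_nonneg (by linarith)]; linarith
    calc |0 - FF β y| ≤ β * |2 - y| := hk
      _ ≤ β * |x - y| := mul_le_mul_of_nonneg_left hxy (by linarith)
  · rw [FF_of_ge (by linarith) h1, FF_of_ge (by linarith) h2]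
    simp only [sub_zero, abs_zero]
    exact mul_nonneg (by linarith) (abs_nonneg _)

lemma absContOn_of_lip {g : ℝ → ℝ} {K : ℝ} (hK : 0 ≤ K)
    (h : ∀ x ∈ Set.Icc (0:ℝ) 3, ∀ y ∈ Set.Icc (0:ℝ) 3, |g x - g y| ≤ K * |x - y|) :
    AbsContOn g (Set.Icc 0 3) := by
  intro ε hε
  refine ⟨ε / (K + 1), by positivity, fun n u v huv _ hsum => ?_⟩
  have hterm : ∀ i, |g (v i) - g (u i)| ≤ K * (v i - u i) := by
    intro i
    obtain ⟨h1, h2, h3⟩ := huv i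
    have hb := h (v i) h2 (u i) h1
    rwa [abs_of_nonneg (by linarith : (0:ℝ) ≤ v i - u i)] at hb
  calc (∑ i, |g (v i) - g (u i)|) ≤ ∑ i, K * (v i - u i) :=
        Finset.sum_le_sum fun i _ => hterm i
    _ = K * ∑ i, (v i - u i) := by rw [Finset.mul_sum]
    _ ≤ K * (ε / (K + 1)) := mul_le_mul_of_nonneg_left hsum.le hK
    _ < (K + 1) * (ε / (K + 1)) :=
        mul_lt_mul_of_pos_right (by linarith) (by positivity)
    _ = ε := by field_simp

lemma bv_of_monotoneOn {g : ℝ → ℝ} (hg : MonotoneOn g (Set.Icc 0 3)) :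
    BoundedVariationOn g (Set.Icc (0:ℝ) 3) := by
  have h03 : (0:ℝ) ∈ Set.Icc (0:ℝ) 3 := by norm_num
  have h33 : (3:ℝ) ∈ Set.Icc (0:ℝ) 3 := by norm_num
  have := hg.eVariationOn_le h03 h33
  rw [Set.inter_self] at this
  exact ne_top_of_le_ne_top ENNReal.ofReal_ne_top this

lemma bv_of_antitoneOn {g : ℝ → ℝ} (hg : AntitoneOn g (Set.Icc 0 3)) :
    BoundedVariationOn g (Set.Icc (0:ℝ) 3) := by
  have hm : MonotoneOn (fun x => -g x) (Set.Icc (0:ℝ) 3) :=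
    fun x hx y hy hxy => neg_le_neg (hg hx hy hxy)
  have h1 := bv_of_monotoneOn hm
  have h2 : BoundedVariationOn (Neg.neg ∘ fun x => -g x) (Set.Icc (0:ℝ) 3) :=
    LipschitzWith.comp_boundedVariationOn LipschitzWith.id.neg h1
  have h3 : g = Neg.neg ∘ fun x => -g x := by funext x; simp
  rw [h3]; exact h2

lemma bv_const_mul {g : ℝ → ℝ} (c : ℝ) (h : BoundedVariationOn g (Set.Icc (0:ℝ) 3)) :
    BoundedVariationOn (fun t => c * g t) (Set.Icc (0:ℝ) 3) := by
  have := LipschitzWith.comp_boundedVariationOn (lipschitzWith_smul (β := ℝ) c) h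
  exact this

noncomputable def qlt (e t : ℝ) : ℝ := if t < 2 then (1 - t / 2) ^ e else 0
noncomputable def qle (e t : ℝ) : ℝ := if t ≤ 2 then (1 - t / 2) ^ e else 0

lemma qlt_anti {e : ℝ} (he : 0 ≤ e) : Antitone (qlt e) := by
  intro s t hst
  unfold qlt
  by_cases h1 : t < 2
  · rw [if_pos h1, if_pos (lt_of_le_of_lt hst h1)]
    exact Real.rpow_le_rpow (by linarith) (by linarith) he
  · rw [if_neg h1]
    by_cases h2 : s < 2
    · rw [if_pos h2]; exact Real.rpow_nonneg (by linarith) _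
    · rw [if_neg h2]

lemma qle_anti {e : ℝ} (he : 0 ≤ e) : Antitone (qle e) := by
  intro s t hst
  unfold qle
  by_cases h1 : t ≤ 2
  · rw [if_pos h1, if_pos (hst.trans h1)]
    exact Real.rpow_le_rpow (by linarith) (by linarith) he
  · rw [if_neg h1]
    by_cases h2 : s ≤ 2
    · rw [if_pos h2]; exact Real.rpow_nonneg (by linarith) _
    · rw [if_neg h2]

lemma part1 {a : ℝ} (ha : 0 < a) :
    MemWrBVOn ⌊a⌋₊ (fun t : ℝ => max (1 - t / 2) 0 ^ a) (Set.Icc 0 3) := by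
  have hra : (⌊a⌋₊ : ℝ) ≤ a := Nat.floor_le ha.le
  rcases Nat.eq_zero_or_pos ⌊a⌋₊ with hr0 | hr1
  · rw [hr0]
    show MemWrBVOn 0 (FF a) (Set.Icc 0 3)
    unfold MemWrBVOn
    rw [if_pos rfl]
    apply bv_of_antitoneOn
    intro x _ y _ hxy
    exact Real.rpow_le_rpow (le_max_right _ _)
      (max_le_max (by linarith) le_rfl) ha.le
  · obtain ⟨m, hm⟩ : ∃ m, ⌊a⌋₊ = m + 1 := ⟨⌊a⌋₊ - 1, (Nat.succ_pred_eq_of_pos hr1).symm⟩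
    rw [hm] at hra ⊢
    have hm1 : (m : ℝ) + 1 ≤ a := by push_cast at hra; linarith
    show MemWrBVOn (m + 1) (FF a) (Set.Icc 0 3)
    unfold MemWrBVOn
    rw [if_neg (Nat.succ_ne_zero m)]
    refine ⟨fun k t => cc a k * FF (a - k) t,
      fun t => cc a (m + 1) * qlt (a - m - 1) t,
      fun t => cc a (m + 1) * qle (a - m - 1) t, ?_, ?_, ?_, ?_, ?_, ?_, ?_⟩
    · funext t
      simp [cc, FF]
    · intro k hk t ht
      beta_reduce
      have hcast : ((k:ℝ) + 1 + 1) ≤ (m:ℝ) + 1 := by exact_mod_cast Nat.succ_le_of_lt hk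
      have hβ : 1 < a - k := by linarith
      have hd := ((FF_hasDerivAt hβ t).const_mul (cc a k)).hasDerivWithinAt
        (s := Set.Icc (0:ℝ) 3)
      have heq : cc a (k + 1) * FF (a - ((k:ℕ) + 1 : ℕ)) t
          = cc a k * (-((a - k) / 2) * FF (a - k - 1) t) := by
        rw [cc_succ]
        push_cast
        rw [show a - ((k:ℝ) + 1) = a - (k:ℝ) - 1 from by ring]
        ring
      rw [heq]
      exact hd
    · intro k hk
      have hcast : ((k:ℝ)) ≤ (m:ℝ) := by exact_mod_cast Nat.lt_succ_iff.mp hk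
      have hβ : 1 ≤ a - k := by linarith
      apply absContOn_of_lip (K := |cc a k| * (a - k))
        (mul_nonneg (abs_nonneg _) (by linarith))
      intro x hx y hy
      have hl := FF_lip hβ x hx y hy
      calc |cc a k * FF (a - k) x - cc a k * FF (a - k) y|
          = |cc a k| * |FF (a - k) x - FF (a - k) y| := by rw [← abs_mul, mul_sub]
        _ ≤ |cc a k| * ((a - k) * |x - y|) := mul_le_mul_of_nonneg_left hl (abs_nonneg _)
        _ = |cc a k| * (a - k) * |x - y| := by ring
    · intro t ht
      simp only [Nat.add_sub_cancel]
      beta_reduce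
      by_cases h2 : t < 2
      · have hd := ((FF_hasDerivAt_lt (β := a - m) h2).const_mul (cc a m)).hasDerivWithinAt
          (s := Set.Icc (0:ℝ) 3 ∩ Set.Ici t)
        have heq : cc a (m + 1) * qlt (a - m - 1) t
            = cc a m * (-((a - m) / 2) * (1 - t / 2) ^ (a - (m:ℝ) - 1)) := by
          unfold qlt
          rw [if_pos h2, cc_succ]
          ring
        rw [heq]
        exact hd
      · push_neg at h2
        have hq : qlt (a - m - 1) t = 0 := by unfold qlt; rw [if_neg (not_lt.mpr h2)]
        rw [hq, mul_zero]
        exact (hasDerivWithinAt_const _ _ (0:ℝ)).congr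
          (fun s hs => by rw [FF_of_ge (by linarith) (le_trans h2 hs.2), mul_zero])
          (by rw [FF_of_ge (by linarith) h2, mul_zero])
    · intro t ht
      simp only [Nat.add_sub_cancel]
      beta_reduce
      rcases lt_trichotomy t 2 with h2 | h2 | h2
      · have hd := ((FF_hasDerivAt_lt (β := a - m) h2).const_mul (cc a m)).hasDerivWithinAt
          (s := Set.Icc (0:ℝ) 3 ∩ Set.Iic t)
        have heq : cc a (m + 1) * qle (a - m - 1) t
            = cc a m * (-((a - m) / 2) * (1 - t / 2) ^ (a - (m:ℝ) - 1)) := by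
          unfold qle
          rw [if_pos h2.le, cc_succ]
          ring
        rw [heq]
        exact hd
      · subst h2
        have hL := (FF_hasDerivWithinAt_Iic (β := a - m) (by linarith) (le_refl (2:ℝ))).const_mul
          (cc a m)
        have hd := hL.mono (Set.inter_subset_right :
          Set.Icc (0:ℝ) 3 ∩ Set.Iic 2 ⊆ Set.Iic 2)
        have heq : cc a (m + 1) * qle (a - m - 1) 2
            = cc a m * (-((a - m) / 2) * (1 - 2 / 2 : ℝ) ^ (a - (m:ℝ) - 1)) := by
          unfold qle
          rw [if_pos le_rfl, cc_succ]
          ring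
        rw [heq]
        exact hd
      · have hq : qle (a - m - 1) t = 0 := by unfold qle; rw [if_neg (not_le.mpr h2)]
        rw [hq, mul_zero]
        apply (hasDerivWithinAt_const _ _ (0:ℝ)).congr_of_eventuallyEq
        · filter_upwards [mem_nhdsWithin_of_mem_nhds (Ioi_mem_nhds h2)] with s hs
          rw [FF_of_ge (by linarith) (le_of_lt hs), mul_zero]
        · rw [FF_of_ge (by linarith) h2.le, mul_zero]
    · exact bv_const_mul _ (bv_of_antitoneOn ((qlt_anti (by linarith)).antitoneOn _))
    · exact bv_const_mul _ (bv_of_antitoneOn ((qle_anti (by linarith)).antitoneOn _))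

lemma part2 {a : ℝ} (ha : 0 < a) :
    ¬ ContDiffOn ℝ (⌊a⌋₊ + 1 : ℕ) (fun t : ℝ => max (1 - t / 2) 0 ^ a)
      (Set.Icc (0:ℝ) 3) := by
  intro H
  set r := ⌊a⌋₊ with hr
  have hra : (r : ℝ) ≤ a := Nat.floor_le ha.le
  have har : a < r + 1 := Nat.lt_floor_add_one a
  have H2 : ContDiffOn ℝ ((r + 1 : ℕ)) (FF a) (Set.Ioo 0 3) := H.mono Set.Ioo_subset_Icc_self
  have hcont : ∀ mm : ℕ, mm ≤ r + 1 → ContinuousAt (iteratedDeriv mm (FF a)) 2 := by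
    intro mm hmm
    have h1 : ContinuousOn (iteratedDerivWithin mm (FF a) (Set.Ioo 0 3)) (Set.Ioo 0 3) :=
      H2.continuousOn_iteratedDerivWithin (by exact_mod_cast hmm) isOpen_Ioo.uniqueDiffOn
    have h2 : (2:ℝ) ∈ Set.Ioo (0:ℝ) 3 := by norm_num
    have h3 : ContinuousWithinAt (iteratedDeriv mm (FF a)) (Set.Ioo 0 3) 2 := by
      apply (h1 2 h2).congr
      · intro x hx
        simp only [iteratedDerivWithin, iteratedDeriv,
          iteratedFDerivWithin_of_isOpen mm isOpen_Ioo hx]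
      · simp only [iteratedDerivWithin, iteratedDeriv,
          iteratedFDerivWithin_of_isOpen mm isOpen_Ioo h2]
    exact h3.continuousAt (Ioo_mem_nhds (by norm_num) (by norm_num))
  have hleft : ∀ k : ℕ, ∀ t ∈ Set.Ioo (0:ℝ) 2,
      iteratedDeriv k (FF a) t = cc a k * (1 - t / 2) ^ (a - k) := by
    intro k
    induction k with
    | zero =>
      intro t ht
      rw [iteratedDeriv_zero, FF_of_le ht.2.le]
      simp [cc_zero]
    | succ k ih =>
      intro t ht
      rw [iteratedDeriv_succ]
      have hev : iteratedDeriv k (FF a) =ᶠ[nhds t]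
          fun s => cc a k * (1 - s / 2) ^ (a - k) := by
        filter_upwards [Ioo_mem_nhds ht.1 ht.2] with s hs using ih s hs
      rw [hev.deriv_eq]
      have hne : (1 - t / 2 : ℝ) ≠ 0 := ne_of_gt (by linarith [ht.2])
      have hd : HasDerivAt (fun s => cc a k * (1 - s / 2) ^ (a - k))
          (cc a k * (-((a - k) / 2) * (1 - t / 2) ^ (a - k - 1))) t :=
        (hasDerivAt_aux (Or.inl hne)).const_mul (cc a k)
      rw [hd.deriv, cc_succ]
      push_cast
      rw [show a - ((k:ℝ) + 1) = a - (k:ℝ) - 1 from by ring]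
      ring
  have hright : ∀ k : ℕ, ∀ t ∈ Set.Ioo (2:ℝ) 3, iteratedDeriv k (FF a) t = 0 := by
    intro k
    induction k with
    | zero =>
      intro t ht
      rw [iteratedDeriv_zero, FF_of_ge ha ht.1.le]
    | succ k ih =>
      intro t ht
      rw [iteratedDeriv_succ]
      have hev : iteratedDeriv k (FF a) =ᶠ[nhds t] fun _ => (0:ℝ) := by
        filter_upwards [Ioo_mem_nhds ht.1 ht.2] with s hs using ih s hs
      rw [hev.deriv_eq, deriv_const]
  rcases eq_or_lt_of_le hra with hcase | hcase
  · -- a is an integer, a = r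
    have hg := hcont r (Nat.le_succ r)
    have htl : Tendsto (iteratedDeriv r (FF a)) (nhdsWithin 2 (Set.Iio 2))
        (nhds (iteratedDeriv r (FF a) 2)) :=
      hg.tendsto.mono_left nhdsWithin_le_nhds
    have hevl : iteratedDeriv r (FF a) =ᶠ[nhdsWithin 2 (Set.Iio 2)] fun _ => cc a r := by
      filter_upwards [Ioo_mem_nhdsLT_of_mem (show (2:ℝ) ∈ Set.Ioc 0 2 by norm_num)] with s hs
      rw [hleft r s hs, ← hcase, sub_self, Real.rpow_zero, mul_one]
    have h2l : iteratedDeriv r (FF a) 2 = cc a r :=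
      tendsto_nhds_unique ((tendsto_congr' hevl).mp htl) tendsto_const_nhds
    have htr : Tendsto (iteratedDeriv r (FF a)) (nhdsWithin 2 (Set.Ioi 2))
        (nhds (iteratedDeriv r (FF a) 2)) :=
      hg.tendsto.mono_left nhdsWithin_le_nhds
    have hevr : iteratedDeriv r (FF a) =ᶠ[nhdsWithin 2 (Set.Ioi 2)] fun _ => (0:ℝ) := by
      filter_upwards [Ioo_mem_nhdsGT_of_mem (show (2:ℝ) ∈ Set.Ico 2 3 by norm_num)] with s hs
      exact hright r s hs
    have h2r : iteratedDeriv r (FF a) 2 = 0 :=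
      tendsto_nhds_unique ((tendsto_congr' hevr).mp htr) tendsto_const_nhds
    have hcc : cc a r ≠ 0 := cc_ne_zero (fun i hi => by
      have : (i:ℝ) < r := by exact_mod_cast hi
      linarith)
    exact hcc (h2l ▸ h2r)
  · -- r < a
    have hg := hcont (r + 1) le_rfl
    have htl : Tendsto (iteratedDeriv (r + 1) (FF a)) (nhdsWithin 2 (Set.Iio 2))
        (nhds (iteratedDeriv (r + 1) (FF a) 2)) :=
      hg.tendsto.mono_left nhdsWithin_le_nhds
    have hcc : cc a (r + 1) ≠ 0 := cc_ne_zero (fun i hi => by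
      have : (i:ℝ) ≤ r := by exact_mod_cast Nat.lt_succ_iff.mp hi
      linarith)
    have h1 : Tendsto (fun t : ℝ => 1 - t / 2) (nhdsWithin 2 (Set.Iio 2))
        (nhdsWithin 0 (Set.Ioi 0)) := by
      apply tendsto_nhdsWithin_of_tendsto_nhds_of_eventually_within
      · have hc : Tendsto (fun t : ℝ => 1 - t / 2) (nhds 2) (nhds (1 - 2 / 2)) :=
          (continuous_const.sub (continuous_id.div_const 2)).tendsto 2
        norm_num at hc
        exact hc.mono_left nhdsWithin_le_nhds
      · filter_upwards [self_mem_nhdsWithin] with t ht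
        exact Set.mem_Ioi.mpr (by rw [Set.mem_Iio] at ht; linarith)
    have h2 : Tendsto (fun x : ℝ => x ^ (a - ((r:ℝ) + 1))) (nhdsWithin 0 (Set.Ioi 0))
        atTop := by
      have he : (0:ℝ) < ((r:ℝ) + 1) - a := by linarith
      have h3 : Tendsto (fun x : ℝ => (x⁻¹) ^ (((r:ℝ) + 1) - a))
          (nhdsWithin 0 (Set.Ioi 0)) atTop :=
        (tendsto_rpow_atTop he).comp tendsto_inv_nhdsGT_zero
      apply Filter.Tendsto.congr' _ h3
      filter_upwards [self_mem_nhdsWithin] with x hx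
      rw [Set.mem_Ioi] at hx
      rw [Real.inv_rpow hx.le, ← Real.rpow_neg hx.le]
      congr 1
      ring
    have h4 : Tendsto (fun t : ℝ => (1 - t / 2) ^ (a - ((r:ℝ) + 1)))
        (nhdsWithin 2 (Set.Iio 2)) atTop := h2.comp h1
    have h6 : Tendsto (fun t : ℝ => |cc a (r + 1)| * (1 - t / 2) ^ (a - ((r:ℝ) + 1)))
        (nhdsWithin 2 (Set.Iio 2)) atTop :=
      h4.const_mul_atTop (abs_pos.mpr hcc)
    have h5 : Tendsto (fun t : ℝ => |iteratedDeriv (r + 1) (FF a) t|)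
        (nhdsWithin 2 (Set.Iio 2)) atTop := by
      apply Filter.Tendsto.congr' _ h6
      filter_upwards [Ioo_mem_nhdsLT_of_mem (show (2:ℝ) ∈ Set.Ioc 0 2 by norm_num)] with s hs
      rw [hleft (r + 1) s hs, abs_mul,
        abs_of_nonneg (Real.rpow_nonneg (by linarith [hs.2] : (0:ℝ) ≤ 1 - s / 2) _)]
      push_cast
      ring_nf
    exact not_tendsto_nhds_of_tendsto_atTop h5 _ htl.abs

end Stmt11

/-- For `a > 0`, the function `f(t) = (max(1 − t/2, 0))^a` belongs to
`W^{⌊a⌋}BV[0,3]` but is not `⌊a+1⌋ = ⌊a⌋+1` times continuously differentiable on `[0,3]`. -/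
theorem statement11 (a : ℝ) (ha : 0 < a) :
    MemWrBVOn ⌊a⌋₊ (fun t : ℝ => max (1 - t / 2) 0 ^ a) (Set.Icc 0 3) ∧
    ¬ ContDiffOn ℝ (⌊a⌋₊ + 1 : ℕ) (fun t : ℝ => max (1 - t / 2) 0 ^ a)
        (Set.Icc (0:ℝ) 3) := by
  exact ⟨Stmt11.part1 ha, Stmt11.part2 ha⟩

end
end
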